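/- arXiv:1201.0147 — 4 statements merged into one kernel-verified Lean document; each statement's English description precedes it below -/
import Mathlib

section
/- Let b > 0 and c > 0 be real numbers, and let ρ : [0,b] → ℝ be twice differentiable with ρ(s) ≥ 0 for all s ∈ [0,b], ρ(0) = 0, ρ'(0) = 0, and ρ''(s) ≤ c (ρ(s) + |ρ'(s)|) for all s ∈ [0,b]. Then ρ(s) = 0 for every s ∈ [0,b]. -/
open Set Filter Topology

private theorem my_le_gronwallBound {f f' : ℝ → ℝ} {δ K ε a b : ℝ}
    (hf : ContinuousOn f (Icc a b))
    (hf' : ∀ x ∈ Ico a b, HasDerivWithinAt f (f' x) (Ici x) x)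
    (ha : f a ≤ δ) (bound : ∀ x ∈ Ico a b, f' x ≤ K * f x + ε) :
    ∀ x ∈ Icc a b, f x ≤ gronwallBound δ K ε (x - a) :=
  le_gronwallBound_of_liminf_deriv_right_le hf
    (fun x hx _r hr => by
      simpa [slope_def_field, div_eq_inv_mul] using (hf' x hx).liminf_right_slope_le hr)
    ha bound

/-- **Gronwall-type differential-inequality lemma** ([BaCaGS11, Lemma 3.1]):
if `ρ : [0,b] → ℝ` is twice differentiable, nonnegative, with `ρ 0 = 0`, `ρ' 0 = 0`,
and `ρ'' s ≤ c * (ρ s + |ρ' s|)` on `[0,b]`, then `ρ ≡ 0` on `[0,b]`. -/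
theorem stmt_0 (b c : ℝ) (hb : 0 < b) (hc : 0 < c)
    (ρ ρ' ρ'' : ℝ → ℝ)
    (hρ' : ∀ s ∈ Icc (0 : ℝ) b, HasDerivWithinAt ρ (ρ' s) (Icc (0 : ℝ) b) s)
    (hρ'' : ∀ s ∈ Icc (0 : ℝ) b, HasDerivWithinAt ρ' (ρ'' s) (Icc (0 : ℝ) b) s)
    (hnonneg : ∀ s ∈ Icc (0 : ℝ) b, 0 ≤ ρ s)
    (h0 : ρ 0 = 0) (h0' : ρ' 0 = 0)
    (hineq : ∀ s ∈ Icc (0 : ℝ) b, ρ'' s ≤ c * (ρ s + |ρ' s|)) :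
    ∀ s ∈ Icc (0 : ℝ) b, ρ s = 0 := by
  have hcρ : ContinuousOn ρ (Icc 0 b) := fun s hs => (hρ' s hs).continuousWithinAt
  have hcρ' : ContinuousOn ρ' (Icc 0 b) := fun s hs => (hρ'' s hs).continuousWithinAt
  -- conversion of derivatives to right-derivatives
  have hderiv : ∀ (f g : ℝ → ℝ), (∀ s ∈ Icc (0 : ℝ) b, HasDerivWithinAt f (g s) (Icc (0 : ℝ) b) s) →
      ∀ s ∈ Ico (0 : ℝ) b, HasDerivWithinAt f (g s) (Ici s) s := by
    intro f g h s hs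
    refine (h s ⟨hs.1, hs.2.le⟩).mono_of_mem_nhdsWithin ?_
    rw [mem_nhdsWithin]
    exact ⟨Iio b, isOpen_Iio, hs.2, fun x hx => ⟨hs.1.trans hx.2, hx.1.le⟩⟩
  set C := Real.exp (c * b) - 1 with hCdef
  have hC0 : 0 ≤ C := by
    have := Real.one_le_exp (mul_nonneg hc.le hb.le); simp only [hCdef]; linarith
  -- Key estimate : ρ' t ≤ C * M whenever M bounds ρ on [0, T] ∋ t
  have key : ∀ T ∈ Icc (0:ℝ) b, ∀ M, 0 ≤ M → (∀ s ∈ Icc (0:ℝ) T, ρ s ≤ M) →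
      ∀ t ∈ Icc (0:ℝ) T, ρ' t ≤ C * M := by
    intro T hT M hM hBnd t ht
    by_cases hpos : ρ' t ≤ 0
    · exact hpos.trans (mul_nonneg hC0 hM)
    push_neg at hpos
    have htb : t ∈ Icc (0:ℝ) b := ⟨ht.1, ht.2.trans hT.2⟩
    set S := {s | s ∈ Icc (0:ℝ) t ∧ ρ' s ≤ 0} with hSdef
    have hS0 : (0:ℝ) ∈ S := ⟨⟨le_refl 0, ht.1⟩, le_of_eq h0'⟩
    have hSc : IsClosed S :=
      (hcρ'.mono (Icc_subset_Icc le_rfl htb.2)).preimage_isClosed_of_isClosed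
        isClosed_Icc isClosed_Iic
    have hSbdd : BddAbove S := ⟨t, fun s hs => hs.1.2⟩
    set t₁ := sSup S with ht₁def
    have ht₁S : t₁ ∈ S := hSc.csSup_mem ⟨0, hS0⟩ hSbdd
    have ht₁t : t₁ < t :=
      lt_of_le_of_ne ht₁S.1.2 (fun h => absurd (h ▸ ht₁S.2) (not_le.2 hpos))
    have hpos' : ∀ s ∈ Ioc t₁ t, 0 < ρ' s := by
      intro s hs
      by_contra hns; push_neg at hns
      exact absurd (le_csSup hSbdd ⟨⟨ht₁S.1.1.trans hs.1.le, hs.2⟩, hns⟩) (not_le.2 hs.1)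
    have ht₁0 : ρ' t₁ = 0 := by
      refine le_antisymm ht₁S.2 ?_
      have hsub : Ioc t₁ t ⊆ Icc (0:ℝ) b :=
        fun s hs => ⟨ht₁S.1.1.trans hs.1.le, hs.2.trans htb.2⟩
      have hne : (𝓝[Ioc t₁ t] t₁).NeBot := by
        rw [← mem_closure_iff_nhdsWithin_neBot, closure_Ioc ht₁t.ne]
        exact left_mem_Icc.2 ht₁t.le
      exact ge_of_tendsto ((hcρ' t₁ ⟨ht₁S.1.1, ht₁S.1.2.trans htb.2⟩).mono hsub)
        (eventually_nhdsWithin_of_forall fun s hs => (hpos' s hs).le)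
    -- Gronwall for ρ' on [t₁, t]
    have hG := my_le_gronwallBound (f := ρ') (f' := ρ'') (δ := 0) (K := c) (ε := c * M)
      (a := t₁) (b := t)
      (hcρ'.mono (Icc_subset_Icc ht₁S.1.1 htb.2))
      (fun x hx => hderiv ρ' ρ'' hρ'' x ⟨ht₁S.1.1.trans hx.1, lt_of_lt_of_le hx.2 htb.2⟩)
      (le_of_eq ht₁0)
      (by
        intro x hx
        have hxb : x ∈ Icc (0:ℝ) b := ⟨ht₁S.1.1.trans hx.1, (hx.2.le.trans ht.2).trans hT.2⟩
        have h1 := hineq x hxb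
        have h2 : ρ x ≤ M := hBnd x ⟨hxb.1, hx.2.le.trans ht.2⟩
        have h3 : |ρ' x| = ρ' x := by
          rcases eq_or_lt_of_le hx.1 with rfl | hlt
          · rw [ht₁0]; simp
          · exact abs_of_pos (hpos' x ⟨hlt, hx.2.le⟩)
        rw [h3] at h1
        nlinarith)
    have hGt := hG t ⟨ht₁t.le, le_refl t⟩
    rw [gronwallBound_of_K_ne_0 hc.ne'] at hGt
    have hexp : Real.exp (c * (t - t₁)) ≤ Real.exp (c * b) := by
      apply Real.exp_le_exp.2
      have : t - t₁ ≤ b := by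
        have := ht₁S.1.1; have := htb.2; linarith
      nlinarith
    calc ρ' t ≤ 0 * Real.exp (c * (t - t₁)) + c * M / c * (Real.exp (c * (t - t₁)) - 1) := hGt
    _ = M * (Real.exp (c * (t - t₁)) - 1) := by field_simp; ring
    _ ≤ M * C := by
        apply mul_le_mul_of_nonneg_left _ hM
        simp only [hCdef]; linarith
    _ = C * M := mul_comm _ _
  -- the set of times up to which ρ vanishes
  set A := {t | t ∈ Icc (0:ℝ) b ∧ ∀ s ∈ Icc (0:ℝ) t, ρ s = 0} with hAdef
  have hA0 : (0:ℝ) ∈ A := by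
    refine ⟨⟨le_refl 0, hb.le⟩, fun s hs => ?_⟩
    have hs0 : s = 0 := le_antisymm hs.2 hs.1
    rw [hs0, h0]
  have hAbdd : BddAbove A := ⟨b, fun s hs => hs.1.2⟩
  set t₀ := sSup A with ht₀def
  have ht₀mem : t₀ ∈ Icc (0:ℝ) b :=
    ⟨le_csSup hAbdd hA0, csSup_le ⟨0, hA0⟩ fun s hs => hs.1.2⟩
  have ht₀A : ∀ s ∈ Icc (0:ℝ) t₀, ρ s = 0 := by
    have hlt : ∀ s ∈ Ico (0:ℝ) t₀, ρ s = 0 := by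
      intro s hs
      obtain ⟨a, haA, hsa⟩ := exists_lt_of_lt_csSup ⟨0, hA0⟩ hs.2
      exact haA.2 s ⟨hs.1, hsa.le⟩
    intro s hs
    rcases eq_or_lt_of_le hs.1 with h | h
    · rw [← h]; exact h0
    · have hsb : s ≤ b := hs.2.trans ht₀mem.2
      have hsub : Ico 0 s ⊆ Icc (0:ℝ) b := fun x hx => ⟨hx.1, hx.2.le.trans hsb⟩
      have hne : (𝓝[Ico 0 s] s).NeBot := by
        rw [← mem_closure_iff_nhdsWithin_neBot, closure_Ico h.ne]
        exact right_mem_Icc.2 h.le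
      exact tendsto_nhds_unique ((hcρ s ⟨hs.1, hsb⟩).mono hsub)
        (Tendsto.congr' (eventually_nhdsWithin_of_forall fun x hx =>
          (hlt x ⟨hx.1, hx.2.trans_le hs.2⟩).symm) tendsto_const_nhds)
  -- show t₀ = b
  have ht₀b : t₀ = b := by
    by_contra hne
    have ht₀lt : t₀ < b := lt_of_le_of_ne ht₀mem.2 hne
    set d := 1 / (2 * (C + 1)) with hddef
    have hd0 : 0 < d := one_div_pos.2 (by linarith)
    have hCd : C * d < 1 := by
      rw [hddef]
      rw [mul_one_div, div_lt_one (by linarith)]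
      linarith
    set T := min (t₀ + d) b with hTdef
    have hTb : T ∈ Icc (0:ℝ) b := ⟨le_trans ht₀mem.1 (le_min (by linarith) ht₀lt.le), min_le_right _ _⟩
    have ht₀T : t₀ < T := lt_min (by linarith) ht₀lt
    -- maximum of ρ on [0, T]
    obtain ⟨m, hmmem, hmmax'⟩ := isCompact_Icc.exists_isMaxOn (nonempty_Icc.2 hTb.1)
      (hcρ.mono (Icc_subset_Icc le_rfl hTb.2))
    have hmmax : ∀ s ∈ Icc (0:ℝ) T, ρ s ≤ ρ m := fun s hs => hmmax' hs
    set M := ρ m with hMdef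
    have hM0 : 0 ≤ M := hnonneg m ⟨hmmem.1, hmmem.2.trans hTb.2⟩
    have hMzero : M ≤ 0 := by
      rcases le_or_gt m t₀ with hmt | hmt
      · exact le_of_eq (ht₀A m ⟨hmmem.1, hmt⟩)
      · -- Gronwall for ρ on [t₀, m]
        have hG := my_le_gronwallBound (f := ρ) (f' := ρ') (δ := 0) (K := 0) (ε := C * M)
          (a := t₀) (b := m)
          (hcρ.mono (Icc_subset_Icc ht₀mem.1 (hmmem.2.trans hTb.2)))
          (fun x hx => hderiv ρ ρ' hρ' x ⟨ht₀mem.1.trans hx.1,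
            lt_of_lt_of_le hx.2 (hmmem.2.trans hTb.2)⟩)
          (le_of_eq (ht₀A t₀ ⟨ht₀mem.1, le_refl _⟩))
          (by
            intro x hx
            rw [zero_mul, zero_add]
            exact key T hTb M (hM0) hmmax x ⟨ht₀mem.1.trans hx.1, hx.2.le.trans hmmem.2⟩)
        have hGm := hG m ⟨hmt.le, le_refl m⟩
        rw [gronwallBound_K0] at hGm
        simp only [zero_add] at hGm
        have hdm : m - t₀ ≤ d := by
          have : m ≤ t₀ + d := hmmem.2.trans (min_le_left _ _)
          linarith
        have : M ≤ C * M * d := by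
          calc M = ρ m := rfl
          _ ≤ C * M * (m - t₀) := hGm
          _ ≤ C * M * d := by nlinarith
        nlinarith
    have hMeq : M = 0 := le_antisymm hMzero hM0
    -- then ρ = 0 on [0, T], so T ∈ A, contradicting t₀ < T
    have hTA : T ∈ A := by
      refine ⟨hTb, fun s hs => le_antisymm ?_ (hnonneg s ⟨hs.1, hs.2.trans hTb.2⟩)⟩
      rw [← hMeq]; exact hmmax s hs
    exact absurd (le_csSup hAbdd hTA) (not_le.2 ht₀T)
  intro s hs
  exact ht₀A s ⟨hs.1, hs.2.trans_eq ht₀b.symm⟩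
end

section
/- Let U ⊆ ℝ^m be open and, for each l,i,j ∈ {1,…,m}, let Γ^l_{ij} : U → ℝ be locally Lipschitz functions with Γ^l_{ij} = Γ^l_{ji}. Assume that for every p ∈ U with p^m = 0 and every v ∈ ℝ^m with v^m = 0 one has Σ_{i,j} Γ^m_{ij}(p) v^i v^j ≥ 0. Let γ : [0,b] → U be a C² curve satisfying the geodesic equation γ̈^l(s) = −Σ_{i,j} Γ^l_{ij}(γ(s)) γ̇^i(s) γ̇^j(s) for all l and all s ∈ [0,b], with γ^m(0) = 0, γ̇^m(0) = 0, γ^m(s) ≥ 0 for all s ∈ [0,b], and such that the projected point (γ^1(s),…,γ^{m−1}(s),0) belongs to U for all s ∈ [0,b]. Then γ^m(s) = 0 for every s ∈ [0,b]. -/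
open Set

lemma aux_zero (a t C : ℝ) (hat : a < t) (hC : 0 ≤ C)
    (F F' F'' : ℝ → ℝ)
    (hF' : ∀ s ∈ Icc a t, HasDerivWithinAt F (F' s) (Icc a t) s)
    (hF'' : ∀ s ∈ Icc a t, HasDerivWithinAt F' (F'' s) (Icc a t) s)
    (hpos : ∀ s ∈ Icc a t, 0 ≤ F s)
    (hFa : F a = 0) (hF'a : F' a = 0)
    (hineq : ∀ s ∈ Icc a t, F'' s ≤ C * (F s + |F' s|))
    (hsmall : (t - a) * (Real.exp (C * (t - a)) - 1) < 1) :
    ∀ s ∈ Icc a t, F s = 0 := by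
  have contF : ContinuousOn F (Icc a t) := fun s hs => (hF' s hs).continuousWithinAt
  have contF' : ContinuousOn F' (Icc a t) := fun s hs => (hF'' s hs).continuousWithinAt
  obtain ⟨x, hx, hxmax⟩ := isCompact_Icc.exists_isMaxOn (nonempty_Icc.2 hat.le) contF
  set M := F x with hMdef
  have hxmax : ∀ s ∈ Icc a t, F s ≤ M := hxmax
  have hM0 : 0 ≤ M := hpos x hx
  set E := Real.exp (C * (t - a)) - 1 with hEdef
  have hE0 : 0 ≤ E := by
    have : (1:ℝ) ≤ Real.exp (C * (t - a)) := Real.one_le_exp (by nlinarith)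
    linarith
  have claim1 : ∀ s ∈ Icc a t, F' s ≤ E * M := by
    intro s hs
    rcases le_or_gt (F' s) 0 with h | h
    · exact h.trans (by positivity)
    have has : a < s := by
      rcases eq_or_lt_of_le hs.1 with rfl | h'
      · exact absurd hF'a (by linarith)
      · exact h'
    set G := {r ∈ Icc a s | F' r ≤ 0} with hGdef
    have hGne : a ∈ G := ⟨⟨le_refl a, has.le⟩, hF'a.le⟩
    have hGb : BddAbove G := BddAbove.mono (sep_subset _ _) bddAbove_Icc
    have hGc : IsClosed G :=
      (contF'.mono (Icc_subset_Icc_right hs.2)).preimage_isClosed_of_isClosed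
        isClosed_Icc isClosed_Iic
    set s1 := sSup G with hs1def
    have hs1G : s1 ∈ G := hGc.csSup_mem ⟨a, hGne⟩ hGb
    have hs1a : a ≤ s1 := hs1G.1.1
    have hs1s : s1 < s := by
      rcases eq_or_lt_of_le hs1G.1.2 with h' | h'
      · exact absurd hs1G.2 (by rw [h']; linarith)
      · exact h'
    have hposF' : ∀ r ∈ Ioc s1 s, 0 < F' r := by
      intro r hr
      by_contra hle
      push_neg at hle
      have : r ∈ G := ⟨⟨hs1a.trans hr.1.le, hr.2⟩, hle⟩
      exact absurd (le_csSup hGb this) (not_le.2 hr.1)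
    set φ : ℝ → ℝ := fun r => (F' r + M) * Real.exp (-C * (r - s1)) with hφdef
    have hsub : Icc s1 s ⊆ Icc a t := Icc_subset_Icc hs1a hs.2
    have hcontφ : ContinuousOn φ (Icc s1 s) :=
      ((contF'.mono hsub).add continuousOn_const).mul
        ((Real.continuous_exp.comp (continuous_const.mul (continuous_id.sub continuous_const))).continuousOn)
    have hder : ∀ r ∈ interior (Icc s1 s),
        HasDerivAt φ ((F'' r + (F' r + M) * (-C)) * Real.exp (-C * (r - s1))) r := by
      intro r hr
      rw [interior_Icc] at hr
      have hrmem : r ∈ Icc a t := hsub ⟨hr.1.le, hr.2.le⟩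
      have hrint : Icc a t ∈ nhds r :=
        Icc_mem_nhds (lt_of_le_of_lt hs1a hr.1) (lt_of_lt_of_le hr.2 hs.2)
      have hF'r : HasDerivAt F' (F'' r) r := (hF'' r hrmem).hasDerivAt hrint
      have hexp : HasDerivAt (fun r => Real.exp (-C * (r - s1)))
          (Real.exp (-C * (r - s1)) * (-C * 1)) r :=
        (((hasDerivAt_id r).sub_const s1).const_mul (-C)).exp
      have := (hF'r.add_const M).mul hexp
      exact this.congr_deriv (by ring)
    have hmono : AntitoneOn φ (Icc s1 s) := by
      apply antitoneOn_of_deriv_nonpos (convex_Icc _ _) hcontφ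
      · intro r hr
        exact (hder r hr).differentiableAt.differentiableWithinAt
      · intro r hr
        rw [(hder r hr).deriv]
        have hr' := hr
        rw [interior_Icc] at hr'
        have hrmem : r ∈ Icc a t := hsub ⟨hr'.1.le, hr'.2.le⟩
        have h1 : F'' r ≤ C * (F r + |F' r|) := hineq r hrmem
        have h2 : 0 < F' r := hposF' r ⟨hr'.1, hr'.2.le⟩
        have h3 : |F' r| = F' r := abs_of_pos h2
        have h4 : F r ≤ M := hxmax r hrmem
        have h5 : F'' r + (F' r + M) * (-C) ≤ 0 := by rw [h3] at h1; nlinarith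
        have h6 : (0:ℝ) < Real.exp (-C * (r - s1)) := Real.exp_pos _
        nlinarith
    have hφs : φ s ≤ φ s1 := hmono ⟨le_refl s1, hs1s.le⟩ ⟨hs1s.le, le_refl s⟩ hs1s.le
    have hφs1 : φ s1 ≤ M := by
      simp only [hφdef, sub_self, mul_zero, Real.exp_zero, mul_one]
      linarith [hs1G.2]
    have hkey : F' s + M ≤ M * Real.exp (C * (s - s1)) := by
      have h6 : (0:ℝ) < Real.exp (-C * (s - s1)) := Real.exp_pos _
      have h7 : Real.exp (-C * (s - s1)) * Real.exp (C * (s - s1)) = 1 := by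
        rw [← Real.exp_add]; ring_nf; exact Real.exp_zero
      have h8 : φ s ≤ M := le_trans hφs hφs1
      have h9 : (0:ℝ) < Real.exp (C * (s - s1)) := Real.exp_pos _
      calc F' s + M = (F' s + M) * Real.exp (-C * (s - s1)) * Real.exp (C * (s - s1)) := by
            rw [mul_assoc, h7, mul_one]
        _ ≤ M * Real.exp (C * (s - s1)) := by
            apply mul_le_mul_of_nonneg_right _ h9.le
            exact h8
    have hexp_le : Real.exp (C * (s - s1)) ≤ Real.exp (C * (t - a)) := by
      apply Real.exp_le_exp.2
      apply mul_le_mul_of_nonneg_left _ hC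
      linarith [hs.2]
    nlinarith
  have claim2 : ∀ s ∈ Icc a t, F s ≤ (s - a) * (E * M) := by
    intro s hs
    set ψ : ℝ → ℝ := fun r => F r - (r - a) * (E * M) with hψdef
    have hcontψ : ContinuousOn ψ (Icc a t) :=
      contF.sub (((continuous_id.sub continuous_const).mul continuous_const).continuousOn)
    have hder : ∀ r ∈ interior (Icc a t), HasDerivAt ψ (F' r - E * M) r := by
      intro r hr
      rw [interior_Icc] at hr
      have hrint : Icc a t ∈ nhds r := Icc_mem_nhds hr.1 hr.2
      have hFr : HasDerivAt F (F' r) r := (hF' r ⟨hr.1.le, hr.2.le⟩).hasDerivAt hrint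
      have h2 : HasDerivAt (fun r => (r - a) * (E * M)) (1 * (E * M)) r :=
        ((hasDerivAt_id r).sub_const a).mul_const (E * M)
      have := hFr.sub h2
      simp only [one_mul] at this
      exact this
    have hmono : AntitoneOn ψ (Icc a t) := by
      apply antitoneOn_of_deriv_nonpos (convex_Icc _ _) hcontψ
      · intro r hr
        exact (hder r hr).differentiableAt.differentiableWithinAt
      · intro r hr
        rw [(hder r hr).deriv]
        have hr' := hr
        rw [interior_Icc] at hr'
        have := claim1 r ⟨hr'.1.le, hr'.2.le⟩
        linarith
    have := hmono ⟨le_refl a, hat.le⟩ hs hs.1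
    simp only [hψdef, hFa, sub_self, zero_mul, zero_sub, sub_zero] at this
    linarith [this]
  have hM_le : M ≤ (t - a) * (E * M) := by
    have h1 := claim2 x hx
    have h2 : (x - a) * (E * M) ≤ (t - a) * (E * M) := by
      apply mul_le_mul_of_nonneg_right _ (by positivity)
      linarith [hx.2]
    linarith
  have hMzero : M ≤ 0 := by nlinarith
  intro s hs
  have := hxmax s hs
  have := hpos s hs
  linarith

/-- **Coordinate form of Lemma 3.2**: in a chart adapted to the hypersurface
`H = {x^m = 0}`, with locally Lipschitz symmetric Christoffel symbols `Γ` that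
satisfy the infinitesimal-convexity condition `∑ Γ^m_{ij}(p) v^i v^j ≥ 0` for all
`p ∈ U ∩ H` and all `v` tangent to `H`, a geodesic starting on `H`, tangent to `H`,
and remaining on the side `{x^m ≥ 0}` (and whose projection to `H` stays in `U`)
lies entirely in `H`. -/
theorem stmt_1 (m : ℕ) (hm : 0 < m) (U : Set (Fin m → ℝ)) (hU : IsOpen U)
    (Γ : Fin m → Fin m → Fin m → (Fin m → ℝ) → ℝ)
    (hΓlip : ∀ l i j, LocallyLipschitzOn U (Γ l i j))
    (hΓsym : ∀ l i j p, Γ l i j p = Γ l j i p)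
    (hconv : ∀ p ∈ U, p ⟨m - 1, by omega⟩ = 0 →
      ∀ v : Fin m → ℝ, v ⟨m - 1, by omega⟩ = 0 →
        0 ≤ ∑ i, ∑ j, Γ ⟨m - 1, by omega⟩ i j p * v i * v j)
    (b : ℝ) (hb : 0 < b) (γ γ' γ'' : ℝ → Fin m → ℝ)
    (hγU : ∀ s ∈ Icc (0 : ℝ) b, γ s ∈ U)
    (hγ' : ∀ s ∈ Icc (0 : ℝ) b, HasDerivWithinAt γ (γ' s) (Icc (0 : ℝ) b) s)
    (hγ'' : ∀ s ∈ Icc (0 : ℝ) b, HasDerivWithinAt γ' (γ'' s) (Icc (0 : ℝ) b) s)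
    (hγ''cont : ContinuousOn γ'' (Icc (0 : ℝ) b))
    (hgeo : ∀ s ∈ Icc (0 : ℝ) b, ∀ l,
      γ'' s l = -∑ i, ∑ j, Γ l i j (γ s) * γ' s i * γ' s j)
    (hinit : γ 0 ⟨m - 1, by omega⟩ = 0)
    (hinit' : γ' 0 ⟨m - 1, by omega⟩ = 0)
    (hside : ∀ s ∈ Icc (0 : ℝ) b, 0 ≤ γ s ⟨m - 1, by omega⟩)
    (hproj : ∀ s ∈ Icc (0 : ℝ) b,
      Function.update (γ s) ⟨m - 1, by omega⟩ 0 ∈ U) :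
    ∀ s ∈ Icc (0 : ℝ) b, γ s ⟨m - 1, by omega⟩ = 0 := by
  set e : Fin m := ⟨m - 1, by omega⟩ with he
  set F : ℝ → ℝ := fun s => γ s e with hFdef
  set F' : ℝ → ℝ := fun s => γ' s e with hF'def
  set F'' : ℝ → ℝ := fun s => γ'' s e with hF''def
  -- component derivatives
  have hFd : ∀ s ∈ Icc (0:ℝ) b, HasDerivWithinAt F (F' s) (Icc (0:ℝ) b) s := by
    intro s hs
    exact (ContinuousLinearMap.proj (R := ℝ) (φ := fun _ : Fin m => ℝ)
      e).hasFDerivAt.comp_hasDerivWithinAt s (hγ' s hs)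
  have hFd' : ∀ s ∈ Icc (0:ℝ) b, HasDerivWithinAt F' (F'' s) (Icc (0:ℝ) b) s := by
    intro s hs
    exact (ContinuousLinearMap.proj (R := ℝ) (φ := fun _ : Fin m => ℝ)
      e).hasFDerivAt.comp_hasDerivWithinAt s (hγ'' s hs)
  have contF : ContinuousOn F (Icc 0 b) := fun s hs => (hFd s hs).continuousWithinAt
  -- velocity bound
  have contγ' : ContinuousOn γ' (Icc 0 b) := fun s hs => (hγ'' s hs).continuousWithinAt
  obtain ⟨V0, hV0⟩ := isCompact_Icc.exists_bound_of_continuousOn contγ'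
  set V := max V0 0 with hVdef
  have hVnn : (0:ℝ) ≤ V := le_max_right _ _
  have hV : ∀ s ∈ Icc (0:ℝ) b, ∀ i, |γ' s i| ≤ V := by
    intro s hs i
    calc |γ' s i| = ‖γ' s i‖ := rfl
      _ ≤ ‖γ' s‖ := norm_le_pi_norm (γ' s) i
      _ ≤ V0 := hV0 s hs
      _ ≤ V := le_max_left _ _
  -- F' vanishes at the right end of an interval where F vanishes
  have hF'zero : ∀ T ∈ Icc (0:ℝ) b, (∀ s ∈ Icc (0:ℝ) T, F s = 0) → F' T = 0 := by
    intro T hT hz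
    rcases eq_or_lt_of_le hT.1 with rfl | hT0
    · exact hinit'
    · have h1 : HasDerivWithinAt F (F' T) (Icc 0 T) T :=
        (hFd T hT).mono (Icc_subset_Icc_right hT.2)
      have h2 : HasDerivWithinAt (fun _ => (0:ℝ)) (F' T) (Icc 0 T) T :=
        h1.congr (fun s hs => (hz s hs).symm) (hz T ⟨hT.1, le_refl T⟩).symm
      have h3 := (uniqueDiffOn_Icc hT0) T ⟨hT.1, le_refl T⟩
      have h4 := h2.derivWithin h3
      have h5 := (hasDerivWithinAt_const T (Icc 0 T) (0:ℝ)).derivWithin h3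
      rw [← h4]
      exact h5
  -- the local step
  have step : ∀ T ∈ Ico (0:ℝ) b, (∀ s ∈ Icc (0:ℝ) T, F s = 0) →
      ∃ t, T < t ∧ t ≤ b ∧ ∀ s ∈ Icc (0:ℝ) t, F s = 0 := by
    intro T hT hz
    have hTb : T ∈ Icc (0:ℝ) b := ⟨hT.1, hT.2.le⟩
    set x0 := γ T with hx0def
    have hx0U : x0 ∈ U := hγU T hTb
    have hx0e : x0 e = 0 := hz T ⟨hT.1, le_refl T⟩
    have hch : ∀ i j : Fin m, ∃ K : NNReal, ∃ N, N ∈ nhdsWithin x0 U ∧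
        LipschitzOnWith K (Γ e i j) N := fun i j => hΓlip e i j hx0U
    choose K N hN hLip using hch
    have hNnhds : ∀ i j, N i j ∈ nhds x0 := by
      intro i j
      have : nhdsWithin x0 U = nhds x0 := nhdsWithin_eq_nhds.2 (hU.mem_nhds hx0U)
      rw [← this]; exact hN i j
    obtain ⟨r, hr0, hball⟩ : ∃ r > 0, Metric.ball x0 r ⊆ ⋂ i, ⋂ j, N i j :=
      Metric.mem_nhds_iff.1 (Filter.iInter_mem.2 fun i => Filter.iInter_mem.2 fun j => hNnhds i j)
    have hmemN : ∀ y ∈ Metric.ball x0 r, ∀ i j, y ∈ N i j := by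
      intro y hy i j
      exact Set.mem_iInter.1 (Set.mem_iInter.1 (hball hy) i) j
    -- continuity near T: both γ s and its projection are in the ball
    have hγcontT : ContinuousWithinAt γ (Icc 0 b) T := (hγ' T hTb).continuousWithinAt
    have hPcont : Continuous (fun p : Fin m → ℝ => Function.update p e 0) := by
      apply continuous_pi
      intro j
      by_cases hj : j = e
      · subst hj
        simpa [Function.update_self] using
          (continuous_const : Continuous (fun _ : Fin m → ℝ => (0:ℝ)))
      · simpa [Function.update_of_ne hj] using continuous_apply j
    have hPγT : Function.update (γ T) e 0 = x0 := by
      rw [← hx0e]; exact Function.update_eq_self e (γ T)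
    have h1 : γ ⁻¹' (Metric.ball x0 r) ∈ nhdsWithin T (Icc (0:ℝ) b) :=
      hγcontT.preimage_mem_nhdsWithin (Metric.ball_mem_nhds x0 hr0)
    have h2 : (fun s => Function.update (γ s) e 0) ⁻¹' (Metric.ball x0 r) ∈
        nhdsWithin T (Icc (0:ℝ) b) := by
      have hc : ContinuousWithinAt (fun s => Function.update (γ s) e 0) (Icc 0 b) T :=
        hPcont.continuousAt.comp_continuousWithinAt hγcontT
      apply hc.preimage_mem_nhdsWithin
      exact hPγT ▸ Metric.ball_mem_nhds x0 hr0
    obtain ⟨δ1, hδ1, hδsub⟩ := Metric.mem_nhdsWithin_iff.1 (Filter.inter_mem h1 h2)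
    -- constants
    set A : Fin m → Fin m → ℝ := fun i j => |Γ e i j x0| + (K i j : ℝ) * r with hAdef
    have hAnn : ∀ i j, 0 ≤ A i j := fun i j => by positivity
    set C : ℝ := ∑ i, ∑ j, (A i j * V + (K i j : ℝ) * V * V) with hCdef
    have hC0 : 0 ≤ C := by
      apply Finset.sum_nonneg; intro i _
      apply Finset.sum_nonneg; intro j _
      have := hAnn i j
      positivity
    set δ : ℝ := min (δ1 / 2) (1 / Real.exp (C * b)) with hδdef
    have hδ0 : 0 < δ := lt_min (by linarith) (by positivity)
    set t := min (T + δ) b with htdef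
    have hTt : T < t := lt_min (by linarith) hT.2
    have htb : t ≤ b := min_le_right _ _
    have hIcc : Icc T t ⊆ Icc (0:ℝ) b := Icc_subset_Icc hT.1 htb
    have htT : t - T ≤ δ := by
      have : t ≤ T + δ := min_le_left _ _
      linarith
    -- membership in the ball for s ∈ [T, t]
    have hnear : ∀ s ∈ Icc T t, γ s ∈ Metric.ball x0 r ∧
        Function.update (γ s) e 0 ∈ Metric.ball x0 r := by
      intro s hs
      have hsb : s ∈ Icc (0:ℝ) b := hIcc hs
      have hd : dist s T < δ1 := by
        rw [Real.dist_eq, abs_of_nonneg (by linarith [hs.1])]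
        have : s ≤ t := hs.2
        have h' : δ ≤ δ1 / 2 := min_le_left _ _
        linarith [hs.1]
      exact hδsub ⟨Metric.mem_ball.2 hd, hsb⟩
    -- Lipschitz and boundedness estimates
    have hAbound : ∀ s ∈ Icc T t, ∀ i j,
        |Γ e i j (Function.update (γ s) e 0)| ≤ A i j := by
      intro s hs i j
      have hq := (hnear s hs).2
      have hx0mem : x0 ∈ N i j := hmemN x0 (Metric.mem_ball_self hr0) i j
      have hqmem := hmemN _ hq i j
      have hd := (hLip i j).dist_le_mul _ hqmem _ hx0mem
      rw [Real.dist_eq] at hd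
      have hdle : dist (Function.update (γ s) e 0) x0 < r := Metric.mem_ball.1 hq
      have : |Γ e i j (Function.update (γ s) e 0) - Γ e i j x0| ≤ (K i j : ℝ) * r := by
        calc |Γ e i j (Function.update (γ s) e 0) - Γ e i j x0|
            ≤ (K i j : ℝ) * dist (Function.update (γ s) e 0) x0 := hd
          _ ≤ (K i j : ℝ) * r := by
              apply mul_le_mul_of_nonneg_left hdle.le (K i j).2
      calc |Γ e i j (Function.update (γ s) e 0)|
          ≤ |Γ e i j x0| + |Γ e i j (Function.update (γ s) e 0) - Γ e i j x0| := by
            have := abs_add_le (Γ e i j x0)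
              (Γ e i j (Function.update (γ s) e 0) - Γ e i j x0)
            simpa using this
        _ ≤ A i j := by rw [hAdef]; dsimp only; linarith
    have hLipest : ∀ s ∈ Icc T t, ∀ i j,
        |Γ e i j (γ s) - Γ e i j (Function.update (γ s) e 0)| ≤ (K i j : ℝ) * F s := by
      intro s hs i j
      have hsb : s ∈ Icc (0:ℝ) b := hIcc hs
      have hFpos : 0 ≤ F s := hside s hsb
      have hdpq : dist (γ s) (Function.update (γ s) e 0) ≤ F s := by
        rw [dist_pi_le_iff hFpos]
        intro k
        by_cases hk : k = e
        · subst hk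
          rw [Function.update_self, Real.dist_eq, sub_zero]
          exact le_of_eq (abs_of_nonneg hFpos)
        · rw [Function.update_of_ne hk, dist_self]
          exact hFpos
      have hp := (hnear s hs).1
      have hq := (hnear s hs).2
      have hd := (hLip i j).dist_le_mul _ (hmemN _ hp i j) _ (hmemN _ hq i j)
      rw [Real.dist_eq] at hd
      calc |Γ e i j (γ s) - Γ e i j (Function.update (γ s) e 0)|
          ≤ (K i j : ℝ) * dist (γ s) (Function.update (γ s) e 0) := hd
        _ ≤ (K i j : ℝ) * F s := mul_le_mul_of_nonneg_left hdpq (K i j).2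
    -- the differential inequality
    have hineq : ∀ s ∈ Icc T t, F'' s ≤ C * (F s + |F' s|) := by
      intro s hs
      have hsb : s ∈ Icc (0:ℝ) b := hIcc hs
      set p := γ s with hpdef
      set q := Function.update (γ s) e 0 with hqdef
      set u := γ' s with hudef
      set w := Function.update u e 0 with hwdef
      have hqU : q ∈ U := hproj s hsb
      have hqe : q e = 0 := Function.update_self e 0 (γ s)
      have hwe : w e = 0 := Function.update_self e 0 u
      have hQ : 0 ≤ ∑ i, ∑ j, Γ e i j q * w i * w j := hconv q hqU hqe w hwe
      have hgeoe : F'' s = -∑ i, ∑ j, Γ e i j p * u i * u j := hgeo s hsb e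
      have hsplit : ∑ i, ∑ j, Γ e i j p * u i * u j
          = (∑ i, ∑ j, Γ e i j q * w i * w j)
            + ((∑ i, ∑ j, (Γ e i j q * u i * u j - Γ e i j q * w i * w j))
            + (∑ i, ∑ j, (Γ e i j p - Γ e i j q) * u i * u j)) := by
        rw [← Finset.sum_add_distrib, ← Finset.sum_add_distrib]
        apply Finset.sum_congr rfl
        intro i _
        rw [← Finset.sum_add_distrib, ← Finset.sum_add_distrib]
        apply Finset.sum_congr rfl
        intro j _
        ring
      have hubd : ∀ k, |u k| ≤ V := fun k => hV s hsb k
      have hFpos : 0 ≤ F s := hside s hsb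
      have hR1 : |∑ i, ∑ j, (Γ e i j q * u i * u j - Γ e i j q * w i * w j)|
          ≤ (∑ i, ∑ j, A i j * V) * |F' s| := by
        rw [Finset.sum_mul]
        apply (Finset.abs_sum_le_sum_abs _ _).trans
        apply Finset.sum_le_sum
        intro i _
        rw [Finset.sum_mul]
        apply (Finset.abs_sum_le_sum_abs _ _).trans
        apply Finset.sum_le_sum
        intro j _
        have hA := hAbound s hs i j
        have heq : Γ e i j q * u i * u j - Γ e i j q * w i * w j
            = Γ e i j q * (u i * u j - w i * w j) := by ring
        have hud : |u i * u j - w i * w j| ≤ V * |F' s| := by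
          by_cases hi : i = e
          · subst hi
            rw [hwdef, Function.update_self, zero_mul, sub_zero, abs_mul]
            have h' : |u e| = |F' s| := rfl
            rw [h']
            calc |F' s| * |u j| ≤ |F' s| * V :=
                  mul_le_mul_of_nonneg_left (hubd j) (abs_nonneg _)
              _ = V * |F' s| := mul_comm _ _
          · by_cases hj : j = e
            · subst hj
              rw [hwdef, Function.update_self, mul_zero, sub_zero, abs_mul]
              exact mul_le_mul_of_nonneg_right (hubd i) (abs_nonneg _)
            · rw [hwdef, Function.update_of_ne hi, Function.update_of_ne hj, sub_self,
                abs_zero]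
              positivity
        rw [heq, abs_mul]
        calc |Γ e i j q| * |u i * u j - w i * w j|
            ≤ A i j * (V * |F' s|) :=
              mul_le_mul hA hud (abs_nonneg _) (hAnn i j)
          _ = A i j * V * |F' s| := by ring
      have hR2 : |∑ i, ∑ j, (Γ e i j p - Γ e i j q) * u i * u j|
          ≤ (∑ i, ∑ j, (K i j : ℝ) * V * V) * F s := by
        rw [Finset.sum_mul]
        apply (Finset.abs_sum_le_sum_abs _ _).trans
        apply Finset.sum_le_sum
        intro i _
        rw [Finset.sum_mul]
        apply (Finset.abs_sum_le_sum_abs _ _).trans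
        apply Finset.sum_le_sum
        intro j _
        have hL := hLipest s hs i j
        rw [abs_mul, abs_mul]
        have hK0 : 0 ≤ (K i j : ℝ) * F s := mul_nonneg (K i j).2 hFpos
        have h1 : |Γ e i j p - Γ e i j q| * |u i| ≤ ((K i j : ℝ) * F s) * V :=
          mul_le_mul hL (hubd i) (abs_nonneg _) hK0
        have h2 : |Γ e i j p - Γ e i j q| * |u i| * |u j|
            ≤ ((K i j : ℝ) * F s) * V * V :=
          mul_le_mul h1 (hubd j) (abs_nonneg _) (mul_nonneg hK0 hVnn)
        exact le_of_le_of_eq h2 (by ring)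
      have hCsplit : C = (∑ i, ∑ j, A i j * V) + (∑ i, ∑ j, (K i j : ℝ) * V * V) := by
        rw [hCdef, ← Finset.sum_add_distrib]
        apply Finset.sum_congr rfl
        intro i _
        rw [← Finset.sum_add_distrib]
      have hS1nn : 0 ≤ ∑ i, ∑ j, A i j * V :=
        Finset.sum_nonneg fun i _ => Finset.sum_nonneg fun j _ =>
          mul_nonneg (hAnn i j) hVnn
      have hS2nn : 0 ≤ ∑ i, ∑ j, (K i j : ℝ) * V * V :=
        Finset.sum_nonneg fun i _ => Finset.sum_nonneg fun j _ => by positivity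
      have habs : 0 ≤ |F' s| := abs_nonneg _
      rw [hgeoe, hsplit]
      have hb1 : -(∑ i, ∑ j, (Γ e i j q * u i * u j - Γ e i j q * w i * w j))
          ≤ (∑ i, ∑ j, A i j * V) * |F' s| := (neg_le_abs _).trans hR1
      have hb2 : -(∑ i, ∑ j, (Γ e i j p - Γ e i j q) * u i * u j)
          ≤ (∑ i, ∑ j, (K i j : ℝ) * V * V) * F s := (neg_le_abs _).trans hR2
      have hS1C : (∑ i, ∑ j, A i j * V) ≤ C := by rw [hCsplit]; linarith
      have hS2C : (∑ i, ∑ j, (K i j : ℝ) * V * V) ≤ C := by rw [hCsplit]; linarith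
      have hm1 : (∑ i, ∑ j, A i j * V) * |F' s| ≤ C * |F' s| :=
        mul_le_mul_of_nonneg_right hS1C habs
      have hm2 : (∑ i, ∑ j, (K i j : ℝ) * V * V) * F s ≤ C * F s :=
        mul_le_mul_of_nonneg_right hS2C hFpos
      have : -(∑ i, ∑ j, Γ e i j q * w i * w j) ≤ 0 := by linarith
      calc -((∑ i, ∑ j, Γ e i j q * w i * w j)
            + ((∑ i, ∑ j, (Γ e i j q * u i * u j - Γ e i j q * w i * w j))
            + (∑ i, ∑ j, (Γ e i j p - Γ e i j q) * u i * u j)))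
          = -(∑ i, ∑ j, Γ e i j q * w i * w j)
            + (-(∑ i, ∑ j, (Γ e i j q * u i * u j - Γ e i j q * w i * w j))
            + -(∑ i, ∑ j, (Γ e i j p - Γ e i j q) * u i * u j)) := by ring
        _ ≤ C * (F s + |F' s|) := by linarith
    -- smallness
    have hsmall : (t - T) * (Real.exp (C * (t - T)) - 1) < 1 := by
      set X := Real.exp (C * b) with hXdef
      have hX1 : (1:ℝ) ≤ X := Real.one_le_exp (by positivity)
      have hX0 : (0:ℝ) < X := lt_of_lt_of_le one_pos hX1
      have htTb : t - T ≤ b := by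
        have := hT.1
        linarith [htb]
      have hexple : Real.exp (C * (t - T)) ≤ X := by
        rw [hXdef]
        apply Real.exp_le_exp.2
        exact mul_le_mul_of_nonneg_left htTb hC0
      have hdle : t - T ≤ 1 / X := by
        have : δ ≤ 1 / Real.exp (C * b) := min_le_right _ _
        rw [← hXdef] at this
        linarith
      have h0tT : 0 < t - T := by linarith
      have key : (t - T) * (Real.exp (C * (t - T)) - 1) ≤ (1 / X) * (X - 1) := by
        apply mul_le_mul hdle (by linarith) (by linarith [Real.one_le_exp (show (0:ℝ) ≤ C * (t - T) by positivity)]) (by positivity)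
      have : (1 / X) * (X - 1) = 1 - 1 / X := by field_simp
      rw [this] at key
      have : 0 < 1 / X := by positivity
      linarith
    -- apply the auxiliary lemma
    have hzero := aux_zero T t C hTt hC0 F F' F''
      (fun s hs => (hFd s (hIcc hs)).mono hIcc)
      (fun s hs => (hFd' s (hIcc hs)).mono hIcc)
      (fun s hs => hside s (hIcc hs))
      (hz T ⟨hT.1, le_refl T⟩)
      (hF'zero T hTb hz)
      hineq hsmall
    refine ⟨t, hTt, htb, ?_⟩
    intro s hs'
    rcases le_total s T with h | h
    · exact hz s ⟨hs'.1, h⟩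
    · exact hzero s ⟨h, hs'.2⟩
  -- glue: the set where F vanishes up to r
  set S := {r ∈ Icc (0:ℝ) b | ∀ s ∈ Icc (0:ℝ) r, F s = 0} with hSdef
  have h0S : (0:ℝ) ∈ S := by
    refine ⟨⟨le_refl 0, hb.le⟩, ?_⟩
    intro s hs
    have : s = 0 := le_antisymm hs.2 hs.1
    rw [this]
    exact hinit
  have hSbdd : BddAbove S := BddAbove.mono (sep_subset _ _) bddAbove_Icc
  have hSne : S.Nonempty := ⟨0, h0S⟩
  set T := sSup S with hTdef
  have hTmem : T ∈ Icc (0:ℝ) b :=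
    ⟨le_csSup hSbdd h0S, csSup_le hSne (fun x hx => hx.1.2)⟩
  have hlt : ∀ s, 0 ≤ s → s < T → F s = 0 := by
    intro s hs0 hsT
    obtain ⟨x, hxS, hsx⟩ := exists_lt_of_lt_csSup hSne hsT
    exact hxS.2 s ⟨hs0, hsx.le⟩
  have hFT : F T = 0 := by
    rcases eq_or_lt_of_le hTmem.1 with h | h
    · rw [← h]; exact hinit
    · have hZclosed : IsClosed {s ∈ Icc (0:ℝ) b | F s = 0} :=
        contF.preimage_isClosed_of_isClosed isClosed_Icc isClosed_singleton
      have hsub : Ico (0:ℝ) T ⊆ {s ∈ Icc (0:ℝ) b | F s = 0} := by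
        intro s hs
        exact ⟨⟨hs.1, le_trans hs.2.le hTmem.2⟩, hlt s hs.1 hs.2⟩
      have hTcl : T ∈ closure (Ico (0:ℝ) T) := by
        rw [closure_Ico (ne_of_lt h)]
        exact ⟨hTmem.1, le_refl T⟩
      have := (closure_mono hsub).trans (le_of_eq hZclosed.closure_eq) hTcl
      exact this.2
  have hTzero : ∀ s ∈ Icc (0:ℝ) T, F s = 0 := by
    intro s hs
    rcases lt_or_eq_of_le hs.2 with h | h
    · exact hlt s hs.1 h
    · rw [h]; exact hFT
  rcases eq_or_lt_of_le hTmem.2 with hTb | hTb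
  · intro s hs
    exact hTzero s ⟨hs.1, by rw [hTb]; exact hs.2⟩
  · exfalso
    obtain ⟨t, hTt, htb, ht⟩ := step T ⟨hTmem.1, hTb⟩ hTzero
    have : t ∈ S := ⟨⟨le_trans hTmem.1 hTt.le, htb⟩, ht⟩
    have := le_csSup hSbdd this
    linarith
end

section
/- Let Ũ ⊆ ℝ^m be open and convex and φ : Ũ → ℝ be C² with locally Lipschitz second derivative; assume 0 is a regular value of φ, set H = φ⁻¹(0) and Ω = {x ∈ Ũ : φ(x) > 0}, and assume that for every p ∈ H and every v ∈ ℝ^m with dφ_p(v) = 0 one has D²φ_p(v,v) ≤ 0. Then for any two points p, q ∈ Ω, if the straight segment from p to q is contained in Ω ∪ H, then it is in fact contained in Ω. -/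
open Set

set_option maxHeartbeats 1000000

section Aux

variable {m : ℕ}
local notation "E" => EuclideanSpace ℝ (Fin m)

-- derivative of φ along a line
lemma line_deriv1 (φ : E → ℝ) (p v : E) (t : ℝ)
    (hd : HasFDerivAt φ (fderiv ℝ φ (p + t • v)) (p + t • v)) :
    HasDerivAt (fun t : ℝ => φ (p + t • v)) (fderiv ℝ φ (p + t • v) v) t := by
  have hγ : HasDerivAt (fun t : ℝ => p + t • v) v t := by
    simpa using ((hasDerivAt_id t).smul_const v).const_add p
  simpa [Function.comp_def] using hd.comp_hasDerivAt t hγ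

lemma line_deriv2 (φ : E → ℝ) (p v : E) (t : ℝ)
    (hd : HasFDerivAt (fderiv ℝ φ) (fderiv ℝ (fderiv ℝ φ) (p + t • v)) (p + t • v)) :
    HasDerivAt (fun t : ℝ => fderiv ℝ φ (p + t • v) v)
      (fderiv ℝ (fderiv ℝ φ) (p + t • v) v v) t := by
  have hγ : HasDerivAt (fun t : ℝ => p + t • v) v t := by
    simpa using ((hasDerivAt_id t).smul_const v).const_add p
  have h1 : HasFDerivAt (fun x : E => (fderiv ℝ φ x) v)
      ((ContinuousLinearMap.apply ℝ ℝ v).comp (fderiv ℝ (fderiv ℝ φ) (p + t • v)))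
      (p + t • v) :=
    (ContinuousLinearMap.apply ℝ ℝ v).hasFDerivAt.comp _ hd
  simpa [Function.comp_def] using h1.comp_hasDerivAt t hγ

end Aux


/-- Pure arithmetic combination step for the differential inequality. -/
lemma combine_est (c K2 L V M₁ H P μ D G2x G2y T0 T1 T2 T3 : ℝ)
    (hc : 0 < c) (hK2 : 0 ≤ K2) (hL : 0 ≤ L) (hV : 0 ≤ V) (hM₁ : 0 ≤ M₁)
    (hH : 0 ≤ H) (hP : 0 ≤ P) (hD0 : 0 ≤ D)
    (hconvy : T0 ≤ 0)
    (hexp : G2y = T0 + μ * T1 + μ * T2 + μ * (μ * T3))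
    (hT1 : |T1| ≤ K2 * (V + M₁)) (hT2 : |T2| ≤ K2 * (V + M₁)) (hT3 : |T3| ≤ K2)
    (hμb : |μ| ≤ 2 / c * (P + K2 * (2 / c * H) * V)) (hμM : |μ| ≤ M₁)
    (hBL : |G2x - G2y| ≤ L * D * V * V) (hD : D ≤ 2 / c * H) :
    G2x ≤ ((2 / c) ^ 2 * K2 ^ 2 * V * (2 * V + 3 * M₁) + L * (2 / c) * V ^ 2 +
      (2 / c) * K2 * (2 * V + 3 * M₁)) * (H + P) := by
  have habs := abs_nonneg μ
  have h1 : μ * T1 ≤ |μ| * (K2 * (V + M₁)) := by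
    calc μ * T1 ≤ |μ * T1| := le_abs_self _
      _ = |μ| * |T1| := abs_mul _ _
      _ ≤ |μ| * (K2 * (V + M₁)) := mul_le_mul_of_nonneg_left hT1 habs
  have h2 : μ * T2 ≤ |μ| * (K2 * (V + M₁)) := by
    calc μ * T2 ≤ |μ * T2| := le_abs_self _
      _ = |μ| * |T2| := abs_mul _ _
      _ ≤ |μ| * (K2 * (V + M₁)) := mul_le_mul_of_nonneg_left hT2 habs
  have h3 : μ * (μ * T3) ≤ |μ| * (M₁ * K2) := by
    calc μ * (μ * T3) ≤ |μ * (μ * T3)| := le_abs_self _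
      _ = |μ| * (|μ| * |T3|) := by rw [abs_mul, abs_mul]
      _ ≤ |μ| * (M₁ * K2) :=
        mul_le_mul_of_nonneg_left (mul_le_mul hμM hT3 (abs_nonneg _) hM₁) habs
  have hyvv : G2y ≤ |μ| * (K2 * (2 * V + 3 * M₁)) := by
    have hsum : G2y ≤ |μ| * (K2 * (V + M₁)) + |μ| * (K2 * (V + M₁)) + |μ| * (M₁ * K2) := by
      rw [hexp]; linarith
    have heq : |μ| * (K2 * (V + M₁)) + |μ| * (K2 * (V + M₁)) + |μ| * (M₁ * K2) =
        |μ| * (K2 * (2 * V + 3 * M₁)) := by ring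
    linarith [heq ▸ hsum]
  have hKnn2 : 0 ≤ K2 * (2 * V + 3 * M₁) := by nlinarith
  have hμfinal : |μ| * (K2 * (2 * V + 3 * M₁)) ≤
      (2 / c * (P + K2 * (2 / c * H) * V)) * (K2 * (2 * V + 3 * M₁)) :=
    mul_le_mul_of_nonneg_right hμb hKnn2
  have hLD : L * D * V * V ≤ L * (2 / c * H) * V * V := by
    have := mul_le_mul_of_nonneg_left hD hL
    nlinarith [mul_nonneg (mul_nonneg hL hD0) (mul_nonneg hV hV)]
  have hxy : G2x ≤ G2y + L * (2 / c * H) * V * V := by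
    have := (abs_le.1 hBL).2
    linarith
  -- middle expression equals α H + β P
  have hmid : (2 / c * (P + K2 * (2 / c * H) * V)) * (K2 * (2 * V + 3 * M₁)) +
      L * (2 / c * H) * V * V =
      ((2 / c) ^ 2 * K2 ^ 2 * V * (2 * V + 3 * M₁) + L * (2 / c) * V ^ 2) * H +
        ((2 / c) * K2 * (2 * V + 3 * M₁)) * P := by ring
  have hα : 0 ≤ (2 / c) ^ 2 * K2 ^ 2 * V * (2 * V + 3 * M₁) + L * (2 / c) * V ^ 2 := by
    have t1 : 0 ≤ (2 / c) ^ 2 * K2 ^ 2 * V * (2 * V + 3 * M₁) :=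
      mul_nonneg (mul_nonneg (mul_nonneg (by positivity) (sq_nonneg K2)) hV) (by linarith)
    have t2 : 0 ≤ L * (2 / c) * V ^ 2 := by positivity
    linarith
  have hβ : 0 ≤ (2 / c) * K2 * (2 * V + 3 * M₁) :=
    mul_nonneg (mul_nonneg (by positivity) hK2) (by linarith)
  nlinarith [mul_nonneg hα hP, mul_nonneg hβ hH]


lemma rigidity (C : ℝ) (hC : 0 ≤ C) (a b : ℝ)
    (u u' u'' : ℝ → ℝ)
    (hu : ∀ s ∈ Icc a b, HasDerivAt u (u' s) s)
    (hu' : ∀ s ∈ Icc a b, HasDerivAt u' (u'' s) s)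
    (hnn : ∀ s ∈ Icc a b, 0 ≤ u s)
    (h0 : u a = 0) (h0' : u' a = 0)
    (hineq : ∀ s ∈ Icc a b, u'' s ≤ C * (u s + |u' s|)) :
    ∀ s ∈ Icc a b, u s = 0 := by
  have hw : ∀ s ∈ Icc a b, HasDerivAt (fun s => u' s + (C + 1) * u s)
      (u'' s + (C + 1) * u' s) s := fun s hs =>
    (hu' s hs).add ((hu s hs).const_mul (C + 1))
  -- key differential inequality for w
  have hwineq : ∀ s ∈ Icc a b,
      u'' s + (C + 1) * u' s ≤ (2 * C + 1) * max (u' s + (C + 1) * u s) 0 := by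
    intro s hs
    have h1 := hineq s hs
    have h2 := hnn s hs
    rcases le_or_gt 0 (u' s) with h3 | h3
    · have habs : |u' s| = u' s := abs_of_nonneg h3
      rw [habs] at h1
      have hw0 : 0 ≤ u' s + (C + 1) * u s := by nlinarith
      rw [max_eq_left hw0]
      nlinarith [mul_nonneg hC h2, mul_nonneg (mul_nonneg hC hC) h2, mul_nonneg hC h3]
    · have habs : |u' s| = -u' s := abs_of_neg h3
      rw [habs] at h1
      rcases le_or_gt 0 (u' s + (C + 1) * u s) with h4 | h4
      · rw [max_eq_left h4]
        nlinarith [mul_nonneg hC h2, mul_nonneg (mul_nonneg hC hC) h2, mul_nonneg hC h4,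
          mul_nonneg (mul_nonneg hC hC) h4]
      · rw [max_eq_right h4.le]
        nlinarith
  have hwcont : ContinuousOn (fun s => u' s + (C + 1) * u s) (Icc a b) := fun s hs =>
    ((hw s hs).continuousAt).continuousWithinAt
  -- Step A : w ≤ 0 on [a,b]
  have hwle : ∀ s ∈ Icc a b, u' s + (C + 1) * u s ≤ 0 := by
    by_contra hcon
    push_neg at hcon
    obtain ⟨s₁, hs₁, hs₁pos⟩ := hcon
    set S : Set ℝ := {s | s ∈ Icc a s₁ ∧ u' s + (C + 1) * u s ≤ 0} with hSdef
    have haS : a ∈ S := ⟨⟨le_refl a, hs₁.1⟩, by rw [h0, h0']; simp⟩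
    have hSne : S.Nonempty := ⟨a, haS⟩
    have hSbdd : BddAbove S := ⟨s₁, fun x hx => hx.1.2⟩
    have hSclosed : IsClosed S := by
      have : S = Icc a s₁ ∩ ((fun s => u' s + (C + 1) * u s) ⁻¹' (Iic 0)) := by
        ext x; simp [hSdef]
      rw [this]
      exact (hwcont.mono (Icc_subset_Icc le_rfl hs₁.2)).preimage_isClosed_of_isClosed
          isClosed_Icc isClosed_Iic
    set s₀ : ℝ := sSup S with hs₀def
    have hs₀S : s₀ ∈ S := hSclosed.csSup_mem hSne hSbdd
    have hs₀lt : s₀ < s₁ := by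
      rcases lt_or_eq_of_le hs₀S.1.2 with h | h
      · exact h
      · exfalso; rw [h] at hs₀S; linarith [hs₀S.2]
    have hmid : ∀ s ∈ Ioc s₀ s₁, 0 < u' s + (C + 1) * u s := by
      intro s hsmem
      by_contra hcon2
      push_neg at hcon2
      have : s ∈ S := ⟨⟨hs₀S.1.1.trans hsmem.1.le, hsmem.2⟩, hcon2⟩
      have := le_csSup hSbdd this
      linarith [hsmem.1]
    -- z = w * exp(-(M s)) is antitone on [s₀, s₁]
    have hsub : Icc s₀ s₁ ⊆ Icc a b := Icc_subset_Icc hs₀S.1.1 hs₁.2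
    have hexp : ∀ s : ℝ, HasDerivAt (fun s : ℝ => Real.exp (-((2 * C + 1) * s)))
        (Real.exp (-((2 * C + 1) * s)) * -(2 * C + 1)) s := by
      intro s
      have h1 : HasDerivAt (fun s : ℝ => -((2 * C + 1) * s)) (-(2 * C + 1)) s := by
        simpa [Pi.neg_def] using ((hasDerivAt_id s).const_mul (2 * C + 1)).neg
      exact h1.exp
    have hzderiv : ∀ s ∈ Icc a b, HasDerivAt
        (fun s => (u' s + (C + 1) * u s) * Real.exp (-((2 * C + 1) * s)))
        ((u'' s + (C + 1) * u' s) * Real.exp (-((2 * C + 1) * s)) +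
          (u' s + (C + 1) * u s) * (Real.exp (-((2 * C + 1) * s)) * -(2 * C + 1))) s := by
      intro s hs
      exact (hw s hs).mul (hexp s)
    have hanti : AntitoneOn
        (fun s => (u' s + (C + 1) * u s) * Real.exp (-((2 * C + 1) * s))) (Icc s₀ s₁) := by
      apply antitoneOn_of_deriv_nonpos (convex_Icc s₀ s₁)
      · exact fun s hs => ((hzderiv s (hsub hs)).continuousAt).continuousWithinAt
      · intro s hs
        rw [interior_Icc] at hs
        exact ((hzderiv s (hsub (Ioo_subset_Icc_self hs))).differentiableAt).differentiableWithinAt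
      · intro s hs
        rw [interior_Icc] at hs
        have hd := hzderiv s (hsub (Ioo_subset_Icc_self hs))
        rw [hd.deriv]
        have hwpos := hmid s ⟨hs.1, hs.2.le⟩
        have h5 := hwineq s (hsub (Ioo_subset_Icc_self hs))
        rw [max_eq_left hwpos.le] at h5
        have he : 0 < Real.exp (-((2 * C + 1) * s)) := Real.exp_pos _
        nlinarith
    have hord := hanti (left_mem_Icc.2 hs₀lt.le) (right_mem_Icc.2 hs₀lt.le) hs₀lt.le
    dsimp only at hord
    have he : 0 < Real.exp (-((2 * C + 1) * s₁)) := Real.exp_pos _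
    have hA : 0 < (u' s₁ + (C + 1) * u s₁) * Real.exp (-((2 * C + 1) * s₁)) :=
      mul_pos hs₁pos he
    have hB : (u' s₀ + (C + 1) * u s₀) * Real.exp (-((2 * C + 1) * s₀)) ≤ 0 :=
      mul_nonpos_of_nonpos_of_nonneg hs₀S.2 (Real.exp_pos _).le
    linarith
  -- Step B : u ≤ 0 on [a,b]
  intro s hs
  have hexp2 : ∀ t : ℝ, HasDerivAt (fun t : ℝ => Real.exp ((C + 1) * t))
      (Real.exp ((C + 1) * t) * (C + 1)) t := by
    intro t
    have h1 : HasDerivAt (fun t : ℝ => (C + 1) * t) (C + 1) t := by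
      simpa using (hasDerivAt_id t).const_mul (C + 1)
    exact h1.exp
  have hz2deriv : ∀ t ∈ Icc a b, HasDerivAt (fun t => u t * Real.exp ((C + 1) * t))
      (u' t * Real.exp ((C + 1) * t) + u t * (Real.exp ((C + 1) * t) * (C + 1))) t :=
    fun t ht => (hu t ht).mul (hexp2 t)
  have hanti2 : AntitoneOn (fun t => u t * Real.exp ((C + 1) * t)) (Icc a b) := by
    apply antitoneOn_of_deriv_nonpos (convex_Icc a b)
    · exact fun t ht => ((hz2deriv t ht).continuousAt).continuousWithinAt
    · intro t ht
      exact ((hz2deriv t (interior_subset ht)).differentiableAt).differentiableWithinAt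
    · intro t ht
      have ht' := interior_subset ht
      rw [(hz2deriv t ht').deriv]
      have h6 := hwle t ht'
      have he : 0 < Real.exp ((C + 1) * t) := Real.exp_pos _
      nlinarith
  have h1 := hanti2 (left_mem_Icc.2 (hs.1.trans hs.2)) hs hs.1
  simp only [h0, zero_mul] at h1
  have he : 0 < Real.exp ((C + 1) * s) := Real.exp_pos _
  have h2 := hnn s hs
  nlinarith


/-- **Flat instance of geometric convexity**: if `Ũ` is open and convex,
`0` is a regular value of the `C²` function `φ` (with locally Lipschitz second
derivative), `H = φ⁻¹(0)`, `Ω = {φ > 0}`, and `H` is infinitesimally convex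
(`D²φ_p(v,v) ≤ 0` whenever `p ∈ H`, `dφ_p(v) = 0`), then any straight segment
with endpoints in `Ω` contained in `Ω ∪ H` is in fact contained in `Ω`. -/
theorem stmt_5 (m : ℕ) (UT : Set (EuclideanSpace ℝ (Fin m)))
    (hUT : IsOpen UT) (hUTconv : Convex ℝ UT)
    (φ : EuclideanSpace ℝ (Fin m) → ℝ) (hφ : ContDiffOn ℝ 2 φ UT)
    (hφlip : LocallyLipschitzOn UT (fun x => iteratedFDeriv ℝ 2 φ x))
    (hreg : ∀ p ∈ UT, φ p = 0 → fderiv ℝ φ p ≠ 0)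
    (hconv : ∀ p ∈ UT, φ p = 0 → ∀ v : EuclideanSpace ℝ (Fin m),
      fderiv ℝ φ p v = 0 → iteratedFDeriv ℝ 2 φ p ![v, v] ≤ 0)
    (p q : EuclideanSpace ℝ (Fin m))
    (hp : p ∈ {x ∈ UT | 0 < φ x}) (hq : q ∈ {x ∈ UT | 0 < φ x})
    (hseg : segment ℝ p q ⊆ {x ∈ UT | 0 < φ x} ∪ {x ∈ UT | φ x = 0}) :
    segment ℝ p q ⊆ {x ∈ UT | 0 < φ x} := by
  classical
  obtain ⟨hpUT, hpφ⟩ := hp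
  obtain ⟨hqUT, hqφ⟩ := hq
  set v : EuclideanSpace ℝ (Fin m) := q - p with hvdef
  set γ : ℝ → EuclideanSpace ℝ (Fin m) := fun t => p + t • v with hγdef
  have hsegmem : ∀ t ∈ Icc (0:ℝ) 1, γ t ∈ segment ℝ p q := by
    intro t ht
    rw [segment_eq_image']
    exact mem_image_of_mem _ ht
  have hUTmem : ∀ t ∈ Icc (0:ℝ) 1, γ t ∈ UT := by
    intro t ht
    rcases hseg (hsegmem t ht) with h | h
    exacts [h.1, h.1]
  have hgnn : ∀ t ∈ Icc (0:ℝ) 1, 0 ≤ φ (γ t) := by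
    intro t ht
    rcases hseg (hsegmem t ht) with h | h
    exacts [h.2.le, h.2.ge]
  -- differentiability of φ and its derivative on UT
  have hd1 : ∀ x ∈ UT, HasFDerivAt φ (fderiv ℝ φ x) x := by
    intro x hx
    exact ((hφ.contDiffAt (hUT.mem_nhds hx)).differentiableAt (by norm_num)).hasFDerivAt
  have hφ' : ContDiffOn ℝ 1 (fderiv ℝ φ) UT := hφ.fderiv_of_isOpen hUT (by norm_num)
  have hd2 : ∀ x ∈ UT, HasFDerivAt (fderiv ℝ φ) (fderiv ℝ (fderiv ℝ φ) x) x := by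
    intro x hx
    exact ((hφ'.contDiffAt (hUT.mem_nhds hx)).differentiableAt (by norm_num)).hasFDerivAt
  have hg : ∀ t, γ t ∈ UT → HasDerivAt (fun t => φ (γ t)) (fderiv ℝ φ (γ t) v) t :=
    fun t ht => line_deriv1 φ p v t (hd1 _ ht)
  have hg1 : ∀ t, γ t ∈ UT → HasDerivAt (fun t => fderiv ℝ φ (γ t) v)
      (fderiv ℝ (fderiv ℝ φ) (γ t) v v) t :=
    fun t ht => line_deriv2 φ p v t (hd2 _ ht)
  -- it suffices to prove positivity along the segment
  suffices hpos : ∀ t ∈ Icc (0:ℝ) 1, 0 < φ (γ t) by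
    intro z hz
    rw [segment_eq_image'] at hz
    obtain ⟨t, ht, rfl⟩ := hz
    exact ⟨hUTmem t ht, hpos t ht⟩
  by_contra hcon
  push_neg at hcon
  obtain ⟨t₁, ht₁, ht₁le⟩ := hcon
  have ht₁0 : φ (γ t₁) = 0 := le_antisymm ht₁le (hgnn t₁ ht₁)
  -- the zero set and its infimum
  set T : Set ℝ := {t | t ∈ Icc (0:ℝ) 1 ∧ φ (γ t) = 0} with hTdef
  have hTne : T.Nonempty := ⟨t₁, ht₁, ht₁0⟩
  have hTbdd : BddBelow T := ⟨0, fun x hx => hx.1.1⟩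
  have hgcont : ContinuousOn (fun t => φ (γ t)) (Icc (0:ℝ) 1) :=
    fun t ht => ((hg t (hUTmem t ht)).continuousAt).continuousWithinAt
  have hTclosed : IsClosed T := by
    have : T = Icc (0:ℝ) 1 ∩ ((fun t => φ (γ t)) ⁻¹' {0}) := by
      ext x; simp [hTdef]
    rw [this]
    exact hgcont.preimage_isClosed_of_isClosed isClosed_Icc isClosed_singleton
  set t₀ : ℝ := sInf T with ht₀def
  have ht₀T : t₀ ∈ T := hTclosed.csInf_mem hTne hTbdd
  have hγ0 : γ 0 = p := by simp [hγdef]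
  have hγ1 : γ 1 = q := by simp [hγdef, hvdef]
  have ht₀pos : 0 < t₀ := by
    rcases lt_or_eq_of_le ht₀T.1.1 with h | h
    · exact h
    · exfalso
      rw [← h] at ht₀T
      have h2 := ht₀T.2
      rw [hγ0] at h2
      linarith
  have ht₀lt1 : t₀ < 1 := by
    rcases lt_or_eq_of_le ht₀T.1.2 with h | h
    · exact h
    · exfalso
      rw [h] at ht₀T
      have h2 := ht₀T.2
      rw [hγ1] at h2
      linarith
  have hmin : ∀ t, 0 ≤ t → t < t₀ → 0 < φ (γ t) := by
    intro t h0 hlt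
    have htIcc : t ∈ Icc (0:ℝ) 1 := ⟨h0, hlt.le.trans ht₀T.1.2⟩
    rcases (hgnn t htIcc).lt_or_eq with h | h
    · exact h
    · exfalso
      have : t ∈ T := ⟨htIcc, h.symm⟩
      exact absurd (csInf_le hTbdd this) (not_le.2 hlt)
  -- local data at x₀ = γ t₀
  set x₀ : EuclideanSpace ℝ (Fin m) := γ t₀ with hx₀def
  have hx₀UT : x₀ ∈ UT := hUTmem t₀ ht₀T.1
  have hφx₀ : φ x₀ = 0 := ht₀T.2
  -- first derivative vanishes at t₀
  have hg1t₀ : fderiv ℝ φ x₀ v = 0 := by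
    have hloc : IsLocalMin (fun t => φ (γ t)) t₀ := by
      have hIcc : Icc (0:ℝ) 1 ∈ nhds t₀ := Icc_mem_nhds ht₀pos ht₀lt1
      filter_upwards [hIcc] with t ht
      rw [ht₀T.2]
      exact hgnn t ht
    exact hloc.hasDerivAt_eq_zero (hg t₀ hx₀UT)
  -- regular value: nonzero derivative at x₀
  have hcpos : 0 < ‖fderiv ℝ φ x₀‖ := norm_pos_iff.2 (hreg x₀ hx₀UT hφx₀)
  set c : ℝ := ‖fderiv ℝ φ x₀‖ with hcdef
  -- a good direction e
  obtain ⟨e, he1, he2⟩ : ∃ e : EuclideanSpace ℝ (Fin m), ‖e‖ ≤ 1 ∧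
      3 / 4 * c ≤ fderiv ℝ φ x₀ e := by
    obtain ⟨z, hz1, hz2⟩ := (fderiv ℝ φ x₀).exists_lt_apply_of_lt_opNorm
      (show 3 / 4 * c < ‖fderiv ℝ φ x₀‖ by rw [← hcdef]; linarith)
    rw [Real.norm_eq_abs] at hz2
    rcases le_or_gt 0 (fderiv ℝ φ x₀ z) with h | h
    · rw [abs_of_nonneg h] at hz2
      exact ⟨z, hz1.le, hz2.le⟩
    · rw [abs_of_neg h] at hz2
      refine ⟨-z, by simpa using hz1.le, ?_⟩
      rw [map_neg]
      linarith
  -- local Lipschitz constant for the second derivative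
  obtain ⟨L, tset, htset, hlip⟩ := hφlip hx₀UT
  rw [nhdsWithin_eq_nhds.2 (hUT.mem_nhds hx₀UT)] at htset
  -- closeness of the first derivative
  have hfdc : ContinuousOn (fderiv ℝ φ) UT := hφ.continuousOn_fderiv_of_isOpen hUT (by norm_num)
  have hfca : ContinuousAt (fderiv ℝ φ) x₀ := hfdc.continuousAt (hUT.mem_nhds hx₀UT)
  have hev : (fderiv ℝ φ) ⁻¹' Metric.ball (fderiv ℝ φ x₀) (c / 4) ∈ nhds x₀ :=
    hfca.preimage_mem_nhds (Metric.ball_mem_nhds _ (by positivity))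
  -- choose a good radius r
  obtain ⟨r, hrpos, hrsub⟩ := Metric.mem_nhds_iff.1
    (Filter.inter_mem (Filter.inter_mem htset (hUT.mem_nhds hx₀UT)) hev)
  have hballUT : Metric.ball x₀ r ⊆ UT := fun x hx => (hrsub hx).1.2
  have hlipb : LipschitzOnWith L (fun x => iteratedFDeriv ℝ 2 φ x) (Metric.ball x₀ r) :=
    hlip.mono fun x hx => (hrsub hx).1.1
  have hfd_close : ∀ x ∈ Metric.ball x₀ r, ‖fderiv ℝ φ x - fderiv ℝ φ x₀‖ ≤ c / 4 := by
    intro x hx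
    have := (hrsub hx).2
    rw [mem_preimage, Metric.mem_ball, dist_eq_norm] at this
    exact this.le
  -- uniform bound K2 for the second derivative on the ball
  set K2 : ℝ := ‖iteratedFDeriv ℝ 2 φ x₀‖ + (L : ℝ) * r with hK2def
  have hK2nn : 0 ≤ K2 := by positivity
  have hK2 : ∀ x ∈ Metric.ball x₀ r, ‖iteratedFDeriv ℝ 2 φ x‖ ≤ K2 := by
    intro x hx
    have h1 := hlipb.dist_le_mul x hx x₀ (Metric.mem_ball_self hrpos)
    have h2 : dist x x₀ ≤ r := (Metric.mem_ball.1 hx).le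
    have h3 : ‖iteratedFDeriv ℝ 2 φ x‖ - ‖iteratedFDeriv ℝ 2 φ x₀‖ ≤
        dist (iteratedFDeriv ℝ 2 φ x) (iteratedFDeriv ℝ 2 φ x₀) := by
      rw [dist_eq_norm]
      exact norm_sub_norm_le _ _
    have h4 : (L : ℝ) * dist x x₀ ≤ (L : ℝ) * r :=
      mul_le_mul_of_nonneg_left h2 L.2
    rw [hK2def]
    linarith
  -- pointwise bilinear bound
  have hBapp : ∀ x ∈ Metric.ball x₀ r, ∀ a b' : EuclideanSpace ℝ (Fin m),
      |fderiv ℝ (fderiv ℝ φ) x a b'| ≤ K2 * ‖a‖ * ‖b'‖ := by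
    intro x hx a b'
    have heq : fderiv ℝ (fderiv ℝ φ) x a b' = iteratedFDeriv ℝ 2 φ x ![a, b'] := by
      rw [iteratedFDeriv_two_apply]
      simp
    rw [heq, ← Real.norm_eq_abs]
    have h1 := (iteratedFDeriv ℝ 2 φ x).le_opNorm ![a, b']
    have h2 : (∏ i, ‖(![a, b'] : Fin 2 → EuclideanSpace ℝ (Fin m)) i‖) = ‖a‖ * ‖b'‖ := by
      rw [Fin.prod_univ_two]
      simp
    rw [h2] at h1
    calc ‖iteratedFDeriv ℝ 2 φ x ![a, b']‖ ≤ ‖iteratedFDeriv ℝ 2 φ x‖ * (‖a‖ * ‖b'‖) := h1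
      _ ≤ K2 * (‖a‖ * ‖b'‖) := by
          apply mul_le_mul_of_nonneg_right (hK2 x hx) (by positivity)
      _ = K2 * ‖a‖ * ‖b'‖ := by ring
  -- Lipschitz bilinear bound
  have hBlip : ∀ x ∈ Metric.ball x₀ r, ∀ y ∈ Metric.ball x₀ r,
      ∀ a b' : EuclideanSpace ℝ (Fin m),
      |fderiv ℝ (fderiv ℝ φ) x a b' - fderiv ℝ (fderiv ℝ φ) y a b'| ≤
        (L : ℝ) * ‖x - y‖ * ‖a‖ * ‖b'‖ := by
    intro x hx y hy a b'
    have heqx : fderiv ℝ (fderiv ℝ φ) x a b' = iteratedFDeriv ℝ 2 φ x ![a, b'] := by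
      rw [iteratedFDeriv_two_apply]; simp
    have heqy : fderiv ℝ (fderiv ℝ φ) y a b' = iteratedFDeriv ℝ 2 φ y ![a, b'] := by
      rw [iteratedFDeriv_two_apply]; simp
    rw [heqx, heqy, ← Real.norm_eq_abs]
    have h0 : iteratedFDeriv ℝ 2 φ x ![a, b'] - iteratedFDeriv ℝ 2 φ y ![a, b'] =
        (iteratedFDeriv ℝ 2 φ x - iteratedFDeriv ℝ 2 φ y) ![a, b'] := by
      simp
    rw [h0]
    have h1 := (iteratedFDeriv ℝ 2 φ x - iteratedFDeriv ℝ 2 φ y).le_opNorm ![a, b']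
    have h2 : (∏ i, ‖(![a, b'] : Fin 2 → EuclideanSpace ℝ (Fin m)) i‖) = ‖a‖ * ‖b'‖ := by
      rw [Fin.prod_univ_two]; simp
    rw [h2] at h1
    have h3 : ‖iteratedFDeriv ℝ 2 φ x - iteratedFDeriv ℝ 2 φ y‖ ≤ (L : ℝ) * ‖x - y‖ := by
      have := hlipb.dist_le_mul x hx y hy
      rw [dist_eq_norm, dist_eq_norm] at this
      exact this
    calc ‖(iteratedFDeriv ℝ 2 φ x - iteratedFDeriv ℝ 2 φ y) ![a, b']‖ ≤
        ‖iteratedFDeriv ℝ 2 φ x - iteratedFDeriv ℝ 2 φ y‖ * (‖a‖ * ‖b'‖) := h1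
      _ ≤ (L : ℝ) * ‖x - y‖ * (‖a‖ * ‖b'‖) :=
          mul_le_mul_of_nonneg_right h3 (by positivity)
      _ = (L : ℝ) * ‖x - y‖ * ‖a‖ * ‖b'‖ := by ring
  -- quantitative continuity of the first derivative
  have hFlip : ∀ x ∈ Metric.ball x₀ r, ∀ y ∈ Metric.ball x₀ r,
      ‖fderiv ℝ φ x - fderiv ℝ φ y‖ ≤ K2 * ‖x - y‖ := by
    intro x hx y hy
    have hbd : ∀ z ∈ Metric.ball x₀ r, ‖fderiv ℝ (fderiv ℝ φ) z‖ ≤ K2 := by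
      intro z hz
      refine ContinuousLinearMap.opNorm_le_bound _ hK2nn fun a => ?_
      refine ContinuousLinearMap.opNorm_le_bound _ (mul_nonneg hK2nn (norm_nonneg a)) fun b' => ?_
      rw [Real.norm_eq_abs]
      calc |fderiv ℝ (fderiv ℝ φ) z a b'| ≤ K2 * ‖a‖ * ‖b'‖ := hBapp z hz a b'
        _ = K2 * ‖a‖ * ‖b'‖ := rfl
    exact (convex_ball x₀ r).norm_image_sub_le_of_norm_hasFDerivWithin_le
      (fun z hz => (hd2 z (hballUT hz)).hasFDerivWithinAt) hbd hy hx
  -- lower bound for the directional derivative along e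
  have hslope : ∀ x ∈ Metric.ball x₀ r, c / 2 ≤ fderiv ℝ φ x e := by
    intro x hx
    have h1 := (fderiv ℝ φ x - fderiv ℝ φ x₀).le_opNorm e
    rw [ContinuousLinearMap.sub_apply] at h1
    have h2 : ‖fderiv ℝ φ x - fderiv ℝ φ x₀‖ * ‖e‖ ≤ c / 4 * 1 :=
      mul_le_mul (hfd_close x hx) he1 (norm_nonneg _) (by positivity)
    rw [Real.norm_eq_abs] at h1
    have h3 := abs_le.1 (h1.trans h2)
    linarith [h3.1]
  -- upper bound for the derivative applied to v
  have hVfd : ∀ x ∈ Metric.ball x₀ r, |fderiv ℝ φ x v| ≤ 2 * c * ‖v‖ := by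
    intro x hx
    have h1 := (fderiv ℝ φ x).le_opNorm v
    rw [Real.norm_eq_abs] at h1
    have h2 : ‖fderiv ℝ φ x‖ ≤ 2 * c := by
      have h3 : ‖fderiv ℝ φ x‖ - ‖fderiv ℝ φ x₀‖ ≤ ‖fderiv ℝ φ x - fderiv ℝ φ x₀‖ :=
        norm_sub_norm_le _ _
      have h4 := hfd_close x hx
      rw [← hcdef] at h3
      linarith
    calc |fderiv ℝ φ x v| ≤ ‖fderiv ℝ φ x‖ * ‖v‖ := h1
      _ ≤ 2 * c * ‖v‖ := mul_le_mul_of_nonneg_right h2 (norm_nonneg v)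
  -- projection to the zero level set
  have hproj : ∀ x ∈ Metric.ball x₀ (r / 4), 0 ≤ φ x → φ x ≤ c * r / 8 →
      ∃ y ∈ Metric.ball x₀ r, φ y = 0 ∧ ‖x - y‖ ≤ 2 / c * φ x := by
    intro x hx hx0 hxsmall
    have hxr : x ∈ Metric.ball x₀ r := by
      refine Metric.mem_ball.2 (lt_of_lt_of_le (Metric.mem_ball.1 hx) (by linarith))
    rcases hx0.lt_or_eq with hxpos | hxeq
    swap
    · exact ⟨x, hxr, hxeq.symm, by simp [← hxeq]⟩
    set τm : ℝ := 2 * φ x / c with hτmdef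
    have hτm : 0 < τm := by positivity
    have hτmr : τm ≤ r / 4 := by
      rw [hτmdef, div_le_iff₀ hcpos]
      nlinarith
    have hmemseg : ∀ τ ∈ Icc (0:ℝ) τm, x - τ • e ∈ Metric.ball x₀ r := by
      intro τ hτ
      have h1 : ‖x - τ • e - x₀‖ ≤ ‖x - x₀‖ + ‖τ • e‖ := by
        have : x - τ • e - x₀ = (x - x₀) + (-(τ • e)) := by abel
        rw [this]
        simpa using norm_add_le (x - x₀) (-(τ • e))
      have h2 : ‖τ • e‖ ≤ r / 4 := by
        rw [norm_smul, Real.norm_eq_abs, abs_of_nonneg hτ.1]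
        calc τ * ‖e‖ ≤ (r / 4) * 1 :=
          mul_le_mul (hτ.2.trans hτmr) he1 (norm_nonneg e) (by linarith)
        _ = r / 4 := by ring
      have h3 : ‖x - x₀‖ < r / 4 := by
        have := Metric.mem_ball.1 hx
        rwa [dist_eq_norm] at this
      rw [Metric.mem_ball, dist_eq_norm]
      linarith
    have hψd : ∀ τ ∈ Icc (0:ℝ) τm,
        HasDerivAt (fun τ : ℝ => φ (x - τ • e)) (-(fderiv ℝ φ (x - τ • e) e)) τ := by
      intro τ hτ
      have hpath : HasDerivAt (fun τ : ℝ => x - τ • e) (-e) τ := by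
        simpa using ((hasDerivAt_id τ).smul_const e).const_sub x
      have := (hd1 _ (hballUT (hmemseg τ hτ))).comp_hasDerivAt τ hpath
      simpa [Function.comp_def] using this
    have hcont2 : ContinuousOn (fun τ : ℝ => φ (x - τ • e)) (Icc 0 τm) :=
      fun τ hτ => ((hψd τ hτ).continuousAt).continuousWithinAt
    obtain ⟨ξ, hξ, hslopeeq⟩ := exists_hasDerivAt_eq_slope (fun τ : ℝ => φ (x - τ • e))
      (fun τ => -(fderiv ℝ φ (x - τ • e) e)) hτm hcont2
      (fun τ hτ => hψd τ (Ioo_subset_Icc_self hτ))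
    have hψ0 : φ (x - (0:ℝ) • e) = φ x := by simp
    have hslopeeq' : -(fderiv ℝ φ (x - ξ • e) e) * τm = φ (x - τm • e) - φ x := by
      simp only [sub_zero] at hslopeeq
      rw [eq_div_iff hτm.ne'] at hslopeeq
      rw [hslopeeq]
      simp
    have hξc : c / 2 ≤ fderiv ℝ φ (x - ξ • e) e :=
      hslope _ (hmemseg ξ (Ioo_subset_Icc_self hξ))
    have hend : φ (x - τm • e) ≤ 0 := by
      have h1 : φ (x - τm • e) - φ x = -(fderiv ℝ φ (x - ξ • e) e) * τm := hslopeeq'.symm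
      have h2 : -(fderiv ℝ φ (x - ξ • e) e) * τm ≤ -(c / 2) * τm := by
        apply mul_le_mul_of_nonneg_right _ hτm.le
        linarith
      have h3 : -(c / 2) * τm = -φ x := by
        rw [hτmdef]
        field_simp
      linarith
    have h0mem : (0:ℝ) ∈ Icc (φ (x - τm • e)) (φ (x - (0:ℝ) • e)) := by
      rw [hψ0]
      exact ⟨hend, hx0⟩
    obtain ⟨τy, hτy, hτy0⟩ := intermediate_value_Icc' hτm.le hcont2 h0mem
    refine ⟨x - τy • e, hmemseg τy hτy, hτy0, ?_⟩
    have h1 : x - (x - τy • e) = τy • e := by abel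
    rw [h1, norm_smul, Real.norm_eq_abs, abs_of_nonneg hτy.1]
    calc τy * ‖e‖ ≤ τm * 1 := mul_le_mul hτy.2 he1 (norm_nonneg e) hτm.le
      _ = 2 / c * φ x := by rw [hτmdef]; ring
  -- constants for the differential inequality
  set M₁ : ℝ := 4 * ‖v‖ + K2 * ‖v‖ * r / (2 * c) with hM₁def
  have hM₁nn : 0 ≤ M₁ := by
    have h1 : 0 ≤ K2 * ‖v‖ * r := mul_nonneg (mul_nonneg hK2nn (norm_nonneg v)) hrpos.le
    have h2 : 0 ≤ K2 * ‖v‖ * r / (2 * c) := div_nonneg h1 (by positivity)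
    have h3 : (0:ℝ) ≤ 4 * ‖v‖ := by positivity
    rw [hM₁def]; linarith
  have h2V3M : (0:ℝ) ≤ 2 * ‖v‖ + 3 * M₁ := by
    have := norm_nonneg v; linarith
  set CC : ℝ := (2 / c) ^ 2 * K2 ^ 2 * ‖v‖ * (2 * ‖v‖ + 3 * M₁) +
      (L : ℝ) * (2 / c) * ‖v‖ ^ 2 + (2 / c) * K2 * (2 * ‖v‖ + 3 * M₁) with hCCdef
  have hCCnn : 0 ≤ CC := by
    have t1 : 0 ≤ (2 / c) ^ 2 * K2 ^ 2 * ‖v‖ * (2 * ‖v‖ + 3 * M₁) :=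
      mul_nonneg (mul_nonneg (mul_nonneg (by positivity) (sq_nonneg K2)) (norm_nonneg v)) h2V3M
    have t2 : 0 ≤ (L : ℝ) * (2 / c) * ‖v‖ ^ 2 := by positivity
    have t3 : 0 ≤ (2 / c) * K2 * (2 * ‖v‖ + 3 * M₁) :=
      mul_nonneg (mul_nonneg (by positivity) hK2nn) h2V3M
    rw [hCCdef]; linarith
  -- the key differential inequality near t₀
  have hest : ∀ s ∈ Icc (0:ℝ) 1, γ s ∈ Metric.ball x₀ (r / 4) → φ (γ s) ≤ c * r / 8 →
      fderiv ℝ (fderiv ℝ φ) (γ s) v v ≤ CC * (φ (γ s) + |fderiv ℝ φ (γ s) v|) := by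
    intro s hsIcc hxball hsmall
    have hh0 : 0 ≤ φ (γ s) := hgnn s hsIcc
    have hxball' : γ s ∈ Metric.ball x₀ r :=
      Metric.ball_subset_ball (by linarith) hxball
    obtain ⟨y, hyball, hyzero, hyd⟩ := hproj (γ s) hxball hh0 hsmall
    have hyUT : y ∈ UT := hballUT hyball
    have hApos : 0 < fderiv ℝ φ y e :=
      lt_of_lt_of_le (by positivity) (hslope y hyball)
    set μ : ℝ := fderiv ℝ φ y v / fderiv ℝ φ y e with hμdef
    set w : EuclideanSpace ℝ (Fin m) := v - μ • e with hwdef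
    have hwt : fderiv ℝ φ y w = 0 := by
      rw [hwdef, map_sub, map_smul, smul_eq_mul, hμdef]
      field_simp
      ring
    have hconvy : fderiv ℝ (fderiv ℝ φ) y w w ≤ 0 := by
      have h := hconv y hyUT hyzero w hwt
      rw [iteratedFDeriv_two_apply] at h
      simpa using h
    -- bounds
    have hPy : |fderiv ℝ φ y v| ≤ |fderiv ℝ φ (γ s) v| + K2 * (2 / c * φ (γ s)) * ‖v‖ := by
      have h1 : fderiv ℝ φ y v = fderiv ℝ φ (γ s) v + (fderiv ℝ φ y - fderiv ℝ φ (γ s)) v := by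
        rw [ContinuousLinearMap.sub_apply]; ring
      have h2 : |(fderiv ℝ φ y - fderiv ℝ φ (γ s)) v| ≤ K2 * (2 / c * φ (γ s)) * ‖v‖ := by
        have h3 := (fderiv ℝ φ y - fderiv ℝ φ (γ s)).le_opNorm v
        rw [Real.norm_eq_abs] at h3
        have h4 : ‖fderiv ℝ φ y - fderiv ℝ φ (γ s)‖ ≤ K2 * (2 / c * φ (γ s)) := by
          have h5 := hFlip y hyball (γ s) hxball'
          have h6 : ‖y - γ s‖ ≤ 2 / c * φ (γ s) := by
            rw [norm_sub_rev]; exact hyd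
          calc ‖fderiv ℝ φ y - fderiv ℝ φ (γ s)‖ ≤ K2 * ‖y - γ s‖ := h5
            _ ≤ K2 * (2 / c * φ (γ s)) := mul_le_mul_of_nonneg_left h6 hK2nn
        calc |(fderiv ℝ φ y - fderiv ℝ φ (γ s)) v| ≤
            ‖fderiv ℝ φ y - fderiv ℝ φ (γ s)‖ * ‖v‖ := h3
          _ ≤ K2 * (2 / c * φ (γ s)) * ‖v‖ :=
            mul_le_mul_of_nonneg_right h4 (norm_nonneg v)
      calc |fderiv ℝ φ y v| = |fderiv ℝ φ (γ s) v + (fderiv ℝ φ y - fderiv ℝ φ (γ s)) v| := by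
            rw [← h1]
        _ ≤ |fderiv ℝ φ (γ s) v| + |(fderiv ℝ φ y - fderiv ℝ φ (γ s)) v| := abs_add_le _ _
        _ ≤ |fderiv ℝ φ (γ s) v| + K2 * (2 / c * φ (γ s)) * ‖v‖ := by linarith
    have hμb : |μ| ≤ 2 / c * (|fderiv ℝ φ (γ s) v| + K2 * (2 / c * φ (γ s)) * ‖v‖) := by
      rw [hμdef, abs_div, abs_of_pos hApos]
      have h1 : |fderiv ℝ φ y v| / fderiv ℝ φ y e ≤ |fderiv ℝ φ y v| / (c / 2) :=
        div_le_div_of_nonneg_left (abs_nonneg _) (by positivity) (hslope y hyball)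
      have h2 : |fderiv ℝ φ y v| / (c / 2) = 2 / c * |fderiv ℝ φ y v| := by
        field_simp
      rw [h2] at h1
      calc |fderiv ℝ φ y v| / fderiv ℝ φ y e ≤ 2 / c * |fderiv ℝ φ y v| := h1
        _ ≤ 2 / c * (|fderiv ℝ φ (γ s) v| + K2 * (2 / c * φ (γ s)) * ‖v‖) :=
          mul_le_mul_of_nonneg_left hPy (by positivity)
    have hμM : |μ| ≤ M₁ := by
      have h1 := hVfd (γ s) hxball'
      have h2 : K2 * (2 / c * φ (γ s)) * ‖v‖ ≤ K2 * (2 / c * (c * r / 8)) * ‖v‖ := by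
        apply mul_le_mul_of_nonneg_right _ (norm_nonneg v)
        apply mul_le_mul_of_nonneg_left _ hK2nn
        apply mul_le_mul_of_nonneg_left hsmall (by positivity)
      have h3 : 2 / c * (2 * c * ‖v‖ + K2 * (2 / c * (c * r / 8)) * ‖v‖) = M₁ := by
        rw [hM₁def]
        field_simp
        ring
      calc |μ| ≤ 2 / c * (|fderiv ℝ φ (γ s) v| + K2 * (2 / c * φ (γ s)) * ‖v‖) := hμb
        _ ≤ 2 / c * (2 * c * ‖v‖ + K2 * (2 / c * (c * r / 8)) * ‖v‖) := by
            apply mul_le_mul_of_nonneg_left _ (by positivity)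
            linarith
        _ = M₁ := h3
    have hwnorm : ‖w‖ ≤ ‖v‖ + M₁ := by
      rw [hwdef]
      calc ‖v - μ • e‖ ≤ ‖v‖ + ‖μ • e‖ := norm_sub_le _ _
        _ = ‖v‖ + |μ| * ‖e‖ := by rw [norm_smul, Real.norm_eq_abs]
        _ ≤ ‖v‖ + M₁ * 1 := by
            have := mul_le_mul hμM he1 (norm_nonneg e) hM₁nn
            linarith
        _ = ‖v‖ + M₁ := by ring
    -- expansion of the bilinear form at y
    have hvw : v = w + μ • e := by rw [hwdef]; abel
    have hexp : fderiv ℝ (fderiv ℝ φ) y v v =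
        fderiv ℝ (fderiv ℝ φ) y w w + μ * fderiv ℝ (fderiv ℝ φ) y w e +
          μ * fderiv ℝ (fderiv ℝ φ) y e w + μ * (μ * fderiv ℝ (fderiv ℝ φ) y e e) := by
      conv_lhs => rw [hvw]
      simp only [map_add, map_smul, ContinuousLinearMap.add_apply,
        ContinuousLinearMap.smul_apply, smul_eq_mul]
      ring
    have hT1 : |fderiv ℝ (fderiv ℝ φ) y w e| ≤ K2 * (‖v‖ + M₁) := by
      calc |fderiv ℝ (fderiv ℝ φ) y w e| ≤ K2 * ‖w‖ * ‖e‖ := hBapp y hyball w e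
        _ ≤ K2 * (‖v‖ + M₁) * 1 :=
          mul_le_mul (mul_le_mul_of_nonneg_left hwnorm hK2nn) he1 (norm_nonneg e)
            (by positivity)
        _ = K2 * (‖v‖ + M₁) := by ring
    have hT2 : |fderiv ℝ (fderiv ℝ φ) y e w| ≤ K2 * (‖v‖ + M₁) := by
      calc |fderiv ℝ (fderiv ℝ φ) y e w| ≤ K2 * ‖e‖ * ‖w‖ := hBapp y hyball e w
        _ = K2 * ‖w‖ * ‖e‖ := by ring
        _ ≤ K2 * (‖v‖ + M₁) * 1 :=
          mul_le_mul (mul_le_mul_of_nonneg_left hwnorm hK2nn) he1 (norm_nonneg e)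
            (by positivity)
        _ = K2 * (‖v‖ + M₁) := by ring
    have hT3 : |fderiv ℝ (fderiv ℝ φ) y e e| ≤ K2 := by
      calc |fderiv ℝ (fderiv ℝ φ) y e e| ≤ K2 * ‖e‖ * ‖e‖ := hBapp y hyball e e
        _ ≤ K2 * 1 * 1 :=
          mul_le_mul (mul_le_mul_of_nonneg_left he1 hK2nn) he1 (norm_nonneg e)
            (by positivity)
        _ = K2 := by ring
    have hBLest := hBlip (γ s) hxball' y hyball v v
    have hG :=
      combine_est c K2 (L : ℝ) ‖v‖ M₁ (φ (γ s)) (|fderiv ℝ φ (γ s) v|) μ (‖γ s - y‖)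
        (fderiv ℝ (fderiv ℝ φ) (γ s) v v) (fderiv ℝ (fderiv ℝ φ) y v v)
        (fderiv ℝ (fderiv ℝ φ) y w w) (fderiv ℝ (fderiv ℝ φ) y w e)
        (fderiv ℝ (fderiv ℝ φ) y e w) (fderiv ℝ (fderiv ℝ φ) y e e)
        hcpos hK2nn L.2 (norm_nonneg v) hM₁nn hh0 (abs_nonneg _) (norm_nonneg _)
        hconvy hexp hT1 hT2 hT3 hμb hμM hBLest hyd
    rw [hCCdef]
    exact hG
  -- choose δ > 0
  have hcontg : ContinuousAt (fun t => φ (γ t)) t₀ := (hg t₀ hx₀UT).continuousAt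
  have hev2 : (fun t => φ (γ t)) ⁻¹' Iio (c * r / 8) ∈ nhds t₀ := by
    apply hcontg.preimage_mem_nhds
    apply Iio_mem_nhds
    have : φ (γ t₀) = 0 := hφx₀
    rw [this]
    positivity
  obtain ⟨δ₂, hδ₂pos, hδ₂⟩ := Metric.mem_nhds_iff.1 hev2
  set δ : ℝ := min (min (t₀ / 2) (r / (8 * (‖v‖ + 1)))) (δ₂ / 2) with hδdef
  have hδpos : 0 < δ := by
    rw [hδdef]
    apply lt_min (lt_min (by linarith) (by positivity)) (by positivity)
  have hδle1 : δ ≤ t₀ / 2 := (min_le_left _ _).trans (min_le_left _ _)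
  have hδle2 : δ ≤ r / (8 * (‖v‖ + 1)) := (min_le_left _ _).trans (min_le_right _ _)
  have hδle3 : δ ≤ δ₂ / 2 := min_le_right _ _
  have hIcc01 : ∀ s ∈ Icc (t₀ - δ) t₀, s ∈ Icc (0:ℝ) 1 := by
    intro s hs
    exact ⟨by linarith [hs.1], le_trans hs.2 ht₀lt1.le⟩
  have hγdist : ∀ s : ℝ, γ s - x₀ = (s - t₀) • v := by
    intro s
    rw [hx₀def, hγdef]
    simp only
    rw [sub_smul]
    abel
  have hballs : ∀ s ∈ Icc (t₀ - δ) t₀, γ s ∈ Metric.ball x₀ (r / 4) := by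
    intro s hs
    rw [Metric.mem_ball, dist_eq_norm, hγdist s, norm_smul, Real.norm_eq_abs]
    have h1 : |s - t₀| ≤ δ := by
      rw [abs_le]; constructor <;> linarith [hs.1, hs.2]
    have h2 : |s - t₀| * ‖v‖ ≤ δ * (‖v‖ + 1) := by
      apply mul_le_mul h1 (by linarith [norm_nonneg v]) (norm_nonneg v) hδpos.le
    have h3 : δ * (‖v‖ + 1) ≤ r / 8 := by
      have h4 : 0 < ‖v‖ + 1 := by positivity
      calc δ * (‖v‖ + 1) ≤ r / (8 * (‖v‖ + 1)) * (‖v‖ + 1) :=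
        mul_le_mul_of_nonneg_right hδle2 h4.le
      _ = r / 8 := by field_simp
    linarith
  have hsmalls : ∀ s ∈ Icc (t₀ - δ) t₀, φ (γ s) ≤ c * r / 8 := by
    intro s hs
    have h1 : |s - t₀| ≤ δ := by
      rw [abs_le]; constructor <;> linarith [hs.1, hs.2]
    have h2 : dist s t₀ < δ₂ := by
      rw [Real.dist_eq]
      linarith
    have h3 := hδ₂ (Metric.mem_ball.2 h2)
    simp only [mem_preimage, mem_Iio] at h3
    exact h3.le
  -- apply rigidity to u(σ) = φ(γ(t₀ - σ)) on [0, δ]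
  have hmem2 : ∀ σ ∈ Icc (0:ℝ) δ, t₀ - σ ∈ Icc (t₀ - δ) t₀ := by
    intro σ hσ
    exact ⟨by linarith [hσ.2], by linarith [hσ.1]⟩
  have hUT2 : ∀ σ ∈ Icc (0:ℝ) δ, γ (t₀ - σ) ∈ UT :=
    fun σ hσ => hUTmem _ (hIcc01 _ (hmem2 σ hσ))
  have hτd : ∀ σ : ℝ, HasDerivAt (fun σ : ℝ => t₀ - σ) (-1) σ := by
    intro σ
    simpa using (hasDerivAt_id σ).const_sub t₀
  have hud : ∀ σ ∈ Icc (0:ℝ) δ, HasDerivAt (fun σ => φ (γ (t₀ - σ)))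
      (-(fderiv ℝ φ (γ (t₀ - σ)) v)) σ := by
    intro σ hσ
    have h1 := (hg (t₀ - σ) (hUT2 σ hσ)).comp σ (hτd σ)
    simpa [Function.comp_def] using h1
  have hud' : ∀ σ ∈ Icc (0:ℝ) δ, HasDerivAt (fun σ => -(fderiv ℝ φ (γ (t₀ - σ)) v))
      (fderiv ℝ (fderiv ℝ φ) (γ (t₀ - σ)) v v) σ := by
    intro σ hσ
    have h1 := ((hg1 (t₀ - σ) (hUT2 σ hσ)).comp σ (hτd σ)).neg
    simpa [Function.comp_def, Pi.neg_def] using h1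
  have hrig := rigidity CC hCCnn 0 δ (fun σ => φ (γ (t₀ - σ)))
    (fun σ => -(fderiv ℝ φ (γ (t₀ - σ)) v))
    (fun σ => fderiv ℝ (fderiv ℝ φ) (γ (t₀ - σ)) v v)
    hud hud'
    (fun σ hσ => hgnn _ (hIcc01 _ (hmem2 σ hσ)))
    (by simpa using hφx₀)
    (by simpa using hg1t₀)
    (by
      intro σ hσ
      have h1 := hest (t₀ - σ) (hIcc01 _ (hmem2 σ hσ)) (hballs _ (hmem2 σ hσ))
        (hsmalls _ (hmem2 σ hσ))
      rw [abs_neg]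
      exact h1)
  have hfinal := hrig δ ⟨hδpos.le, le_refl δ⟩
  have hcontra := hmin (t₀ - δ) (by linarith) (by linarith)
  rw [show t₀ - δ = t₀ - δ from rfl] at hcontra
  linarith
end

section
/- Let m ≥ 2 and let q be the Minkowski quadratic form on ℝ^m, q(x) = −x₁² + x₂² + ⋯ + x_m². Let W ⊆ ℝ^m be a linear subspace with dim W ≥ 2. Then every nonzero w ∈ W with q(w) = 0 lies in the closure of the set {v ∈ W : q(v) > 0}. -/
open Set

/-- **Remark 4.1 (spacelike case)**: in Minkowski space `(ℝ^m, q)`,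
`q(x) = −x₁² + x₂² + ⋯ + x_m²`, if `W` is a linear subspace of dimension at
least `2`, then every nonzero null vector of `W` is in the closure of the
spacelike vectors of `W`. -/
theorem stmt_7 (m : ℕ) (hm : 2 ≤ m)
    (q : (Fin m → ℝ) → ℝ)
    (hq : ∀ x, q x = ∑ i : Fin m, (if i.val = 0 then (-1 : ℝ) else 1) * x i ^ 2)
    (W : Submodule ℝ (Fin m → ℝ)) (hW : 2 ≤ Module.finrank ℝ W)
    (w : Fin m → ℝ) (hw : w ∈ W) (hw0 : w ≠ 0) (hwn : q w = 0) :
    w ∈ closure {v : Fin m → ℝ | v ∈ W ∧ 0 < q v} := by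
  set z : Fin m := ⟨0, by omega⟩ with hz
  -- the time coordinate of w is nonzero
  have ha : w z ≠ 0 := by
    intro h0
    apply hw0
    have hsum : ∑ i : Fin m, (w i) ^ 2 = 0 := by
      rw [hq] at hwn
      rw [← hwn]
      apply Finset.sum_congr rfl
      intro i _
      by_cases hi : i.val = 0
      · have hiz : i = z := Fin.ext hi
        subst hiz
        simp [h0]
      · simp [hi]
    have hall := (Finset.sum_eq_zero_iff_of_nonneg
      (fun i _ => sq_nonneg (w i))).mp hsum
    funext i
    exact (pow_eq_zero_iff two_ne_zero).mp (hall i (Finset.mem_univ i))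
  -- pick u ∈ W independent from w
  have hspan : Submodule.span ℝ {w} < W := by
    refine lt_of_le_of_ne ((Submodule.span_le).mpr (by simpa using hw)) ?_
    intro h
    have h1 : Module.finrank ℝ (Submodule.span ℝ {w}) = 1 :=
      finrank_span_singleton hw0
    rw [h] at h1
    omega
  obtain ⟨u, huW, huns⟩ := SetLike.exists_of_lt hspan
  set c : ℝ := u z / w z with hc
  set v : Fin m → ℝ := u - c • w with hv
  have hvW : v ∈ W := W.sub_mem huW (W.smul_mem c hw)
  have hvz : v z = 0 := by
    simp only [hv, hc, Pi.sub_apply, Pi.smul_apply, smul_eq_mul]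
    field_simp
    ring
  have hvne : v ≠ 0 := by
    intro h0
    apply huns
    have : u = c • w := by
      have := sub_eq_zero.mp h0
      simpa using this
    rw [this]
    exact Submodule.smul_mem _ _ (Submodule.mem_span_singleton_self w)
  -- v is spacelike
  have hvpos : 0 < q v := by
    rw [hq]
    obtain ⟨j, hj⟩ := Function.ne_iff.mp hvne
    have hjz : j.val ≠ 0 := by
      intro h
      have : j = z := Fin.ext h
      rw [this, hvz] at hj
      exact hj rfl
    refine Finset.sum_pos' ?_ ⟨j, Finset.mem_univ j, ?_⟩
    · intro i _
      by_cases hi : i.val = 0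
      · have hiz : i = z := Fin.ext hi
        subst hiz
        simp [hvz]
      · rw [if_neg hi]
        positivity
    · rw [if_neg hjz]
      have := pow_two_pos_of_ne_zero (by simpa using hj : v j ≠ 0)
      simpa using this
  -- expansion of q along the line w + t v
  set B : ℝ := ∑ i : Fin m, (if i.val = 0 then (-1 : ℝ) else 1) * (w i * v i)
    with hB
  have expand : ∀ t : ℝ, q (w + t • v) = 2 * t * B + t ^ 2 * q v := by
    intro t
    have : q (w + t • v) = q w + 2 * t * B + t ^ 2 * q v := by
      rw [hq, hq, hq, hB]
      rw [Finset.mul_sum, Finset.mul_sum, ← Finset.sum_add_distrib,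
        ← Finset.sum_add_distrib]
      apply Finset.sum_congr rfl
      intro i _
      simp only [Pi.add_apply, Pi.smul_apply, smul_eq_mul]
      ring
    rw [this, hwn]
    ring
  -- choose the sign of the perturbation
  set s : ℝ := if 0 ≤ B then 1 else -1 with hs
  have hsne : s ≠ 0 := by
    rw [hs]; split <;> norm_num
  have hsB : 0 ≤ s * B := by
    rw [hs]; split
    · simpa using ‹0 ≤ B›
    · nlinarith [lt_of_not_ge ‹¬ 0 ≤ B›]
  set f : ℕ → ℝ := fun n => s / ((n : ℝ) + 1) with hf
  have hmem : ∀ n : ℕ, w + f n • v ∈ {v : Fin m → ℝ | v ∈ W ∧ 0 < q v} := by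
    intro n
    have hn1 : (0 : ℝ) < (n : ℝ) + 1 := by positivity
    have hfne : f n ≠ 0 := div_ne_zero hsne (ne_of_gt hn1)
    refine ⟨W.add_mem hw (W.smul_mem _ hvW), ?_⟩
    rw [expand]
    have h1 : 0 ≤ 2 * f n * B := by
      have : 2 * f n * B = 2 * ((s * B) / ((n : ℝ) + 1)) := by
        rw [hf]; ring
      rw [this]
      positivity
    have h2 : 0 < f n ^ 2 * q v :=
      mul_pos (pow_two_pos_of_ne_zero hfne) hvpos
    linarith
  have htend : Filter.Tendsto (fun n : ℕ => w + f n • v) Filter.atTop (nhds w) := by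
    have h0 : Filter.Tendsto f Filter.atTop (nhds 0) := by
      have := tendsto_one_div_add_atTop_nhds_zero_nat.const_mul s
      simp only [mul_zero] at this
      convert this using 2 with n
      rw [hf]; ring
    have := Filter.Tendsto.add (tendsto_const_nhds (x := w))
      (h0.smul_const v)
    simpa using this
  exact mem_closure_of_tendsto htend (Filter.Eventually.of_forall hmem)
end
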